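/- arXiv:1805.08796 — 3 statements merged into one kernel-verified Lean document; each statement's English description precedes it below -/
import Mathlib

section
/- The number of ordered pairs (g, h) ∈ GL_4(𝔽_q) × GL_4(𝔽_q) such that g is conjugate to J_2(1) ⊕ I_2, h is conjugate to J_2(1) ⊕ I_2, and g·h = J_2(1) ⊕ J_2(1), equals q² + q. (This is the structure constant a^{(1²)_{t−1}}_{(1)_{t−1}, (1)_{t−1}} of the stable center.) -/
open Matrix

set_option linter.unreachableTactic false
set_option linter.unusedTactic false
set_option linter.unusedSectionVars false
set_option maxHeartbeats 1000000

variable {F : Type*} [Field F] [Fintype F] [DecidableEq F]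

private def Um (F : Type*) [Field F] : Matrix (Fin 4) (Fin 4) F :=
  !![1, 1, 0, 0; 0, 1, 0, 0; 0, 0, 1, 0; 0, 0, 0, 1]
private def Gm (a b c : F) : Matrix (Fin 4) (Fin 4) F :=
  !![1, a, 0, b; 0, 1, 0, 0; 0, c, 1, 1 - a; 0, 0, 0, 1]
private def Gi (a b c : F) : Matrix (Fin 4) (Fin 4) F :=
  !![1, -a, 0, -b; 0, 1, 0, 0; 0, -c, 1, a - 1; 0, 0, 0, 1]
private lemma Gm_mul_Gi (a b c : F) : Gm a b c * Gi a b c = 1 := by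
  ext i j
  fin_cases i <;> fin_cases j <;>
    simp [Gm, Gi, Matrix.mul_apply, Fin.sum_univ_four, Matrix.one_apply,
      Matrix.vecHead, Matrix.vecTail] <;> ring
private lemma Gi_mul_Gm (a b c : F) : Gi a b c * Gm a b c = 1 := by
  ext i j
  fin_cases i <;> fin_cases j <;>
    simp [Gm, Gi, Matrix.mul_apply, Fin.sum_univ_four, Matrix.one_apply,
      Matrix.vecHead, Matrix.vecTail] <;> ring
private def Gu (a b c : F) : GL (Fin 4) F :=
  ⟨Gm a b c, Gi a b c, Gm_mul_Gi a b c, Gi_mul_Gm a b c⟩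

private def mkGL (Z W : Matrix (Fin 4) (Fin 4) F) (h1 : Z * W = 1) (h2 : W * Z = 1) :
    GL (Fin 4) F := ⟨Z, W, h1, h2⟩

private lemma mkGL_conj (Z W : Matrix (Fin 4) (Fin 4) F) (h1 : Z * W = 1) (h2 : W * Z = 1)
    (g : GL (Fin 4) F) :
    ((mkGL Z W h1 h2 * g * (mkGL Z W h1 h2)⁻¹ : GL (Fin 4) F) : Matrix (Fin 4) (Fin 4) F)
      = Z * (g : Matrix (Fin 4) (Fin 4) F) * W := rfl

private lemma exists_conj (a b c : F) (hbc : b * c = a * (1 - a)) :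
    ∃ z : GL (Fin 4) F,
      ((z * Gu a b c * z⁻¹ : GL (Fin 4) F) : Matrix (Fin 4) (Fin 4) F) = Um F := by
  by_cases hc : c = 0
  · subst hc
    have h0 : a * (1 - a) = 0 := by linear_combination -hbc
    rcases mul_eq_zero.mp h0 with ha | ha
    · subst ha
      have e1 : (!![0,0,1,0; 0,0,0,1; 1,0,-b,0; 0,1,0,0] : Matrix (Fin 4) (Fin 4) F) *
          !![b,0,1,0; 0,0,0,1; 1,0,0,0; 0,1,0,0] = 1 := by
        ext i j
        fin_cases i <;> fin_cases j <;>
          simp [Matrix.mul_apply, Fin.sum_univ_four, Matrix.one_apply,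
            Matrix.vecHead, Matrix.vecTail] <;> ring
      have e2 : (!![b,0,1,0; 0,0,0,1; 1,0,0,0; 0,1,0,0] : Matrix (Fin 4) (Fin 4) F) *
          !![0,0,1,0; 0,0,0,1; 1,0,-b,0; 0,1,0,0] = 1 := by
        ext i j
        fin_cases i <;> fin_cases j <;>
          simp [Matrix.mul_apply, Fin.sum_univ_four, Matrix.one_apply,
            Matrix.vecHead, Matrix.vecTail] <;> ring
      refine ⟨mkGL _ _ e1 e2, ?_⟩
      rw [mkGL_conj]
      show _ * Gm 0 b 0 * _ = Um F
      ext i j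
      fin_cases i <;> fin_cases j <;>
        simp [Gm, Um, Matrix.mul_apply, Fin.sum_univ_four,
          Matrix.vecHead, Matrix.vecTail] <;> ring
    · have ha' : a = 1 := by linear_combination -ha
      subst ha'
      have e1 : (!![1,0,0,0; 0,1,0,b; 0,0,1,0; 0,0,0,1] : Matrix (Fin 4) (Fin 4) F) *
          !![1,0,0,0; 0,1,0,-b; 0,0,1,0; 0,0,0,1] = 1 := by
        ext i j
        fin_cases i <;> fin_cases j <;>
          simp [Matrix.mul_apply, Fin.sum_univ_four, Matrix.one_apply,
            Matrix.vecHead, Matrix.vecTail] <;> ring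
      have e2 : (!![1,0,0,0; 0,1,0,-b; 0,0,1,0; 0,0,0,1] : Matrix (Fin 4) (Fin 4) F) *
          !![1,0,0,0; 0,1,0,b; 0,0,1,0; 0,0,0,1] = 1 := by
        ext i j
        fin_cases i <;> fin_cases j <;>
          simp [Matrix.mul_apply, Fin.sum_univ_four, Matrix.one_apply,
            Matrix.vecHead, Matrix.vecTail] <;> ring
      refine ⟨mkGL _ _ e1 e2, ?_⟩
      rw [mkGL_conj]
      show _ * Gm 1 b 0 * _ = Um F
      ext i j
      fin_cases i <;> fin_cases j <;>
        simp [Gm, Um, Matrix.mul_apply, Fin.sum_univ_four,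
          Matrix.vecHead, Matrix.vecTail] <;> ring
  · have hb : b = a * (1 - a) * c⁻¹ := by
      field_simp
      linear_combination hbc
    subst hb
    have e1 : (!![0,0,1,0; 0,c,0,1-a; -c,0,a,0; 0,0,0,1] : Matrix (Fin 4) (Fin 4) F) *
        !![a*c⁻¹,0,-c⁻¹,0; 0,c⁻¹,0,(a-1)*c⁻¹; 1,0,0,0; 0,0,0,1] = 1 := by
      ext i j
      fin_cases i <;> fin_cases j <;>
        simp [Matrix.mul_apply, Fin.sum_univ_four, Matrix.one_apply,
          Matrix.vecHead, Matrix.vecTail]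
      all_goals try field_simp
      all_goals try ring
      all_goals tauto
    have e2 : (!![a*c⁻¹,0,-c⁻¹,0; 0,c⁻¹,0,(a-1)*c⁻¹; 1,0,0,0; 0,0,0,1] : Matrix (Fin 4) (Fin 4) F) *
        !![0,0,1,0; 0,c,0,1-a; -c,0,a,0; 0,0,0,1] = 1 := by
      ext i j
      fin_cases i <;> fin_cases j <;>
        simp [Matrix.mul_apply, Fin.sum_univ_four, Matrix.one_apply,
          Matrix.vecHead, Matrix.vecTail]
      all_goals try field_simp
      all_goals try ring
      all_goals tauto
    refine ⟨mkGL _ _ e1 e2, ?_⟩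
    rw [mkGL_conj]
    show _ * Gm a (a * (1 - a) * c⁻¹) c * _ = Um F
    ext i j
    fin_cases i <;> fin_cases j
    all_goals try simp [Gm, Um, Matrix.mul_apply, Fin.sum_univ_four,
      Matrix.vecHead, Matrix.vecTail]
    all_goals try field_simp
    all_goals try ring
    all_goals tauto

private def Cm (F : Type*) [Field F] : Matrix (Fin 4) (Fin 4) F :=
  !![1, 1, 0, 0; 0, 1, 0, 0; 0, 0, 1, 1; 0, 0, 0, 1]
private def Am (F : Type*) [Field F] : Matrix (Fin 4) (Fin 4) F :=
  !![0, 1, 0, 0; 0, 0, 0, 0; 0, 0, 0, 1; 0, 0, 0, 0]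
private def Em (F : Type*) [Field F] : Matrix (Fin 4) (Fin 4) F :=
  !![0, 1, 0, 0; 0, 0, 0, 0; 0, 0, 0, 0; 0, 0, 0, 0]

private lemma Um_eq : Um F = Em F + 1 := by
  ext i j
  fin_cases i <;> fin_cases j <;> simp [Um, Em, Matrix.one_apply, Matrix.vecHead, Matrix.vecTail]
private lemma Em_sq : Em F * Em F = 0 := by
  ext i j
  fin_cases i <;> fin_cases j <;>
    simp [Em, Matrix.mul_apply, Fin.sum_univ_four, Matrix.vecHead, Matrix.vecTail]
private lemma Cm_sub_one : Cm F - 1 = Am F := by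
  ext i j
  fin_cases i <;> fin_cases j <;> simp [Cm, Am, Matrix.one_apply, Matrix.vecHead, Matrix.vecTail]
private lemma Am_sq : Am F * Am F = 0 := by
  ext i j
  fin_cases i <;> fin_cases j <;>
    simp [Am, Matrix.mul_apply, Fin.sum_univ_four, Matrix.vecHead, Matrix.vecTail]
private lemma Em_outer (Z W : Matrix (Fin 4) (Fin 4) F) :
    W * Em F * Z = Matrix.of (fun i j => W i 0 * Z 1 j) := by
  ext i j
  fin_cases i <;> fin_cases j <;>
    simp [Em, Matrix.mul_apply, Fin.sum_univ_four, Matrix.vecHead, Matrix.vecTail] <;> ring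

/-- a matrix conjugate to `Um` is `1` plus a nonzero square-zero outer product -/
private lemma class_struct (g : GL (Fin 4) F)
    (hg : ∃ z : GL (Fin 4) F,
      ((z * g * z⁻¹ : GL (Fin 4) F) : Matrix (Fin 4) (Fin 4) F) = Um F) :
    ∃ v w : Fin 4 → F, ∃ i0 j0 : Fin 4,
      (∀ i j, ((g : Matrix (Fin 4) (Fin 4) F) - 1) i j = v i * w j) ∧
      v i0 ≠ 0 ∧ w j0 ≠ 0 ∧
      ((g : Matrix (Fin 4) (Fin 4) F) - 1) * ((g : Matrix (Fin 4) (Fin 4) F) - 1) = 0 := by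
  obtain ⟨z, hz⟩ := hg
  rw [Units.val_mul, Units.val_mul] at hz
  set Z : Matrix (Fin 4) (Fin 4) F := (z : Matrix (Fin 4) (Fin 4) F) with hZdef
  set W : Matrix (Fin 4) (Fin 4) F := ((z⁻¹ : GL (Fin 4) F) : Matrix (Fin 4) (Fin 4) F) with hWdef
  set G : Matrix (Fin 4) (Fin 4) F := ((g : GL (Fin 4) F) : Matrix (Fin 4) (Fin 4) F) with hGdef
  have hZW : Z * W = 1 := by
    rw [hZdef, hWdef, ← Units.val_mul, mul_inv_cancel, Units.val_one]
  have hWZ : W * Z = 1 := by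
    rw [hZdef, hWdef, ← Units.val_mul, inv_mul_cancel, Units.val_one]
  have hG : G = W * Um F * Z := by
    have h1 : W * (Z * G * W) * Z = (W * Z) * G * (W * Z) := by noncomm_ring
    rw [hz, hWZ, one_mul, mul_one] at h1
    exact h1.symm
  have hN : G - 1 = W * Em F * Z := by
    rw [hG, Um_eq, mul_add, mul_one, add_mul, hWZ]
    abel
  have hN2 : (G - 1) * (G - 1) = 0 := by
    rw [hN]
    have h2 : W * Em F * Z * (W * Em F * Z) = W * (Em F * (Z * W) * Em F) * Z := by
      noncomm_ring
    rw [h2, hZW, mul_one, Em_sq, mul_zero, zero_mul]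
  have hNne : G - 1 ≠ 0 := by
    intro h0
    have h3 : Em F = Z * (W * Em F * Z) * W := by
      have h4 : Z * (W * Em F * Z) * W = (Z * W) * Em F * (Z * W) := by noncomm_ring
      rw [h4, hZW, one_mul, mul_one]
    rw [← hN, h0, mul_zero, zero_mul] at h3
    have h5 := congrFun (congrFun h3 0) 1
    simp [Em] at h5
  obtain ⟨i0, j0, hij⟩ : ∃ i j, (G - 1) i j ≠ 0 := by
    by_contra hcon
    push_neg at hcon
    exact hNne (Matrix.ext fun i j => hcon i j)
  have houter : ∀ i j, (G - 1) i j = W i 0 * Z 1 j := by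
    intro i j
    rw [hN, Em_outer]
    rfl
  rw [houter i0 j0] at hij
  exact ⟨fun i => W i 0, fun j => Z 1 j, i0, j0, houter,
    left_ne_zero_of_mul hij, right_ne_zero_of_mul hij, hN2⟩

section AmHelpers
variable (X : Matrix (Fin 4) (Fin 4) F)

private lemma Am_mul_1 (j : Fin 4) : (Am F * X) 1 j = 0 := by
  simp [Am, Matrix.mul_apply, Fin.sum_univ_four, Matrix.vecHead, Matrix.vecTail]
private lemma Am_mul_0 (j : Fin 4) : (Am F * X) 0 j = X 1 j := by
  simp [Am, Matrix.mul_apply, Fin.sum_univ_four, Matrix.vecHead, Matrix.vecTail]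
private lemma Am_mul_2 (j : Fin 4) : (Am F * X) 2 j = X 3 j := by
  simp [Am, Matrix.mul_apply, Fin.sum_univ_four, Matrix.vecHead, Matrix.vecTail]
private lemma mul_Am_1 (i : Fin 4) : (X * Am F) i 1 = X i 0 := by
  simp [Am, Matrix.mul_apply, Fin.sum_univ_four, Matrix.vecHead, Matrix.vecTail]
private lemma mul_Am_3 (i : Fin 4) : (X * Am F) i 3 = X i 2 := by
  simp [Am, Matrix.mul_apply, Fin.sum_univ_four, Matrix.vecHead, Matrix.vecTail]
private lemma Am_apply_1 (j : Fin 4) : Am F 1 j = 0 := by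
  fin_cases j <;> simp [Am, Matrix.vecHead, Matrix.vecTail]
private lemma Am_apply_3 (j : Fin 4) : Am F 3 j = 0 := by
  fin_cases j <;> simp [Am, Matrix.vecHead, Matrix.vecTail]

end AmHelpers

private lemma hard (g h : GL (Fin 4) F)
    (hg : ∃ z : GL (Fin 4) F,
      ((z * g * z⁻¹ : GL (Fin 4) F) : Matrix (Fin 4) (Fin 4) F) = Um F)
    (hh : ∃ z : GL (Fin 4) F,
      ((z * h * z⁻¹ : GL (Fin 4) F) : Matrix (Fin 4) (Fin 4) F) = Um F)
    (hgh : ((g * h : GL (Fin 4) F) : Matrix (Fin 4) (Fin 4) F) = Cm F) :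
    ∃ a b c : F, b * c = a * (1 - a) ∧
      (g : Matrix (Fin 4) (Fin 4) F) = Gm a b c ∧
      (h : Matrix (Fin 4) (Fin 4) F) = Gm (1 - a) (-b) (-c) := by
  obtain ⟨v, w, i0, j0, hvw, hv0, hw0, hN2⟩ := class_struct g hg
  obtain ⟨v', w', i1, j1, hvw', hv1, hw1, hM2⟩ := class_struct h hh
  rw [Units.val_mul] at hgh
  set G : Matrix (Fin 4) (Fin 4) F := ((g : GL (Fin 4) F) : Matrix (Fin 4) (Fin 4) F) with hGdef
  set H : Matrix (Fin 4) (Fin 4) F := ((h : GL (Fin 4) F) : Matrix (Fin 4) (Fin 4) F) with hHdef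
  set N : Matrix (Fin 4) (Fin 4) F := G - 1 with hNdef
  set M : Matrix (Fin 4) (Fin 4) F := H - 1 with hMdef
  have hsum : N + M + N * M = Am F := by
    have e : N + M + N * M = G * H - 1 := by rw [hNdef, hMdef]; noncomm_ring
    rw [e, hgh, Cm_sub_one]
  have hNM_NA : N * M = N * Am F := by
    have e1 : N * (N + M + N * M) = N * N + N * M + N * N * M := by noncomm_ring
    rw [hsum, hN2] at e1
    simp only [zero_add, zero_mul, add_zero] at e1
    exact e1.symm
  have hNM_AM : N * M = Am F * M := by
    have e2 : (N + M + N * M) * M = N * M + M * M + N * (M * M) := by noncomm_ring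
    rw [hsum, hM2] at e2
    simp only [add_zero, mul_zero] at e2
    exact e2.symm
  set lam : F := w 0 * v' 0 + w 1 * v' 1 + w 2 * v' 2 + w 3 * v' 3 with hlamdef
  have hNMapp : ∀ i j, (N * M) i j = v i * w' j * lam := by
    intro i j
    simp only [Matrix.mul_apply, Fin.sum_univ_four, hvw, hvw', hlamdef]
    ring
  by_cases hlam : lam = 0
  · -- main case: N * M = 0
    have hNM0 : N * M = 0 := by
      ext i j
      rw [hNMapp i j, hlam, mul_zero]
      simp
    have hNA0 : N * Am F = 0 := by rw [← hNM_NA, hNM0]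
    have hAM0 : Am F * M = 0 := by rw [← hNM_AM, hNM0]
    rw [hNM0, add_zero] at hsum
    have hw00 : w 0 = 0 := by
      have e := congrFun (congrFun hNA0 i0) 1
      rw [mul_Am_1, hvw] at e
      simp only [Matrix.zero_apply] at e
      exact (mul_eq_zero.mp e).resolve_left hv0
    have hw20 : w 2 = 0 := by
      have e := congrFun (congrFun hNA0 i0) 3
      rw [mul_Am_3, hvw] at e
      simp only [Matrix.zero_apply] at e
      exact (mul_eq_zero.mp e).resolve_left hv0
    have hv'1 : v' 1 = 0 := by
      have e := congrFun (congrFun hAM0 0) j1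
      rw [Am_mul_0, hvw'] at e
      simp only [Matrix.zero_apply] at e
      exact (mul_eq_zero.mp e).resolve_right hw1
    have hv'3 : v' 3 = 0 := by
      have e := congrFun (congrFun hAM0 2) j1
      rw [Am_mul_2, hvw'] at e
      simp only [Matrix.zero_apply] at e
      exact (mul_eq_zero.mp e).resolve_right hw1
    have hval : ∀ i j, v i * w j + v' i * w' j = Am F i j := by
      intro i j
      have e := congrFun (congrFun hsum i) j
      simp only [Matrix.add_apply, hvw, hvw'] at e
      exact e
    have hv10 : v 1 = 0 := by
      have e := hval 1 j0
      rw [Am_apply_1, hv'1, zero_mul, add_zero] at e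
      exact (mul_eq_zero.mp e).resolve_right hw0
    have hv30 : v 3 = 0 := by
      have e := hval 3 j0
      rw [Am_apply_3, hv'3, zero_mul, add_zero] at e
      exact (mul_eq_zero.mp e).resolve_right hw0
    have e01 := hval 0 1
    have e03 := hval 0 3
    have e21 := hval 2 1
    have e23 := hval 2 3
    simp [Am, Matrix.vecHead, Matrix.vecTail] at e01 e03 e21 e23
    have hd : v 2 * w 3 = 1 - v 0 * w 1 := by
      have minor : (v' 0 * w' 1) * (v' 2 * w' 3) = (v' 0 * w' 3) * (v' 2 * w' 1) := by ring
      rw [show v' 0 * w' 1 = 1 - v 0 * w 1 by linear_combination e01,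
        show v' 2 * w' 3 = 1 - v 2 * w 3 by linear_combination e23,
        show v' 0 * w' 3 = -(v 0 * w 3) by linear_combination e03,
        show v' 2 * w' 1 = -(v 2 * w 1) by linear_combination e21] at minor
      linear_combination -minor
    refine ⟨v 0 * w 1, v 0 * w 3, v 2 * w 1, by linear_combination (v 0 * w 1) * hd, ?_, ?_⟩
    · -- G = Gm a b c
      have hGapp : ∀ i j, G i j = v i * w j + (1 : Matrix (Fin 4) (Fin 4) F) i j := by
        intro i j
        have e := hvw i j
        rw [hNdef] at e
        simp only [Matrix.sub_apply] at e
        linear_combination e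
      ext i j
      fin_cases i <;> fin_cases j <;>
        simp [hGapp, Gm, Matrix.one_apply, hv10, hv30, hw00, hw20,
          Matrix.vecHead, Matrix.vecTail]
      all_goals linear_combination hd
    · -- H = Gm (1-a) (-b) (-c)
      have hHmat : H = (N + M) - N + 1 := by rw [hMdef]; abel
      rw [hsum] at hHmat
      rw [hHmat]
      ext i j
      fin_cases i <;> fin_cases j <;>
        simp [Am, Gm, Matrix.sub_apply, Matrix.add_apply, Matrix.one_apply, hvw,
          hv10, hv30, hw00, hw20, Matrix.vecHead, Matrix.vecTail]
      all_goals linear_combination -hd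
  · -- contradiction case
    exfalso
    have hv10 : v 1 = 0 := by
      have e := congrFun (congrFun hNM_AM 1) j1
      rw [hNMapp 1 j1, Am_mul_1] at e
      rcases mul_eq_zero.mp e with e' | e'
      · exact (mul_eq_zero.mp e').resolve_right hw1
      · exact absurd e' hlam
    have hv30 : v 3 = 0 := by
      have e := congrFun (congrFun hNM_AM 3) j1
      rw [hNMapp 3 j1] at e
      have e3 : (Am F * M) 3 j1 = 0 := by
        simp [Am, Matrix.mul_apply, Fin.sum_univ_four, Matrix.vecHead, Matrix.vecTail]
      rw [e3] at e
      rcases mul_eq_zero.mp e with e' | e'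
      · exact (mul_eq_zero.mp e').resolve_right hw1
      · exact absurd e' hlam
    have hAN0 : Am F * N = 0 := by
      ext i j
      simp only [Matrix.mul_apply, Fin.sum_univ_four, hvw, Matrix.zero_apply]
      fin_cases i <;>
        simp [Am, Matrix.vecHead, Matrix.vecTail, hv10, hv30]
    have hAM0 : Am F * M = 0 := by
      have e := congrArg (fun X => Am F * X) hsum
      simp only [mul_add] at e
      rw [hAN0, ← mul_assoc, hAN0, zero_mul, Am_sq, zero_add, add_zero] at e
      exact e
    have hzero : (N * M) i0 j1 = 0 := by rw [hNM_AM, hAM0]; simp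
    rw [hNMapp i0 j1] at hzero
    rcases mul_eq_zero.mp hzero with e | e
    · rcases mul_eq_zero.mp e with e' | e'
      · exact hv0 e'
      · exact hw1 e'
    · exact hlam e
private def Sol (F : Type*) [Field F] : Type _ :=
  {p : F × F × F // p.2.1 * p.2.2 = p.1 * (1 - p.1)}

private def solEquiv : Sol F ≃ (F × {b : F // b ≠ 0}) ⊕ (Bool × F) where
  toFun p :=
    if hb : p.1.2.1 = 0 then Sum.inr (decide (p.1.1 = 1), p.1.2.2)
    else Sum.inl (p.1.1, ⟨p.1.2.1, hb⟩)
  invFun x :=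
    match x with
    | Sum.inl (a, b) => ⟨(a, b.1, b.1⁻¹ * (a * (1 - a))), by
        simp only
        rw [mul_inv_cancel_left₀ b.2]⟩
    | Sum.inr (t, c) => ⟨((if t then 1 else 0), 0, c), by cases t <;> simp⟩
  left_inv p := by
    obtain ⟨⟨a, b, c⟩, hp⟩ := p
    by_cases hb : b = 0
    · subst hb
      have ha : a * (1 - a) = 0 := by
        simp only at hp
        linear_combination -hp
      simp only [dif_pos rfl]
      apply Subtype.ext
      by_cases ha1 : a = 1
      · simp [ha1]
      · have ha0 : a = 0 := by
          rcases mul_eq_zero.mp ha with h | h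
          · exact h
          · exact absurd (by linear_combination -h) ha1
        simp [ha1, ha0]
    · simp only [dif_neg hb]
      apply Subtype.ext
      simp only
      refine Prod.ext rfl (Prod.ext rfl ?_)
      simp only at hp ⊢
      field_simp
      linear_combination -hp
  right_inv x := by
    match x with
    | Sum.inl (a, b) =>
      simp only [dif_neg b.2]
    | Sum.inr (t, c) =>
      cases t <;> simp

private lemma card_sol (q : ℕ) (hq : Fintype.card F = q) : Nat.card (Sol F) = q ^ 2 + q := by
  have h1 : Nat.card (Sol F) = Nat.card ((F × {b : F // b ≠ 0}) ⊕ (Bool × F)) :=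
    Nat.card_congr solEquiv
  rw [h1, Nat.card_sum, Nat.card_prod, Nat.card_prod]
  have hF : Nat.card F = q := by rw [Nat.card_eq_fintype_card, hq]
  have hB : Nat.card Bool = 2 := by simp [Nat.card_eq_fintype_card]
  have hsub : Nat.card {b : F // b ≠ 0} = q - 1 := by
    rw [Nat.card_eq_fintype_card]
    have := Fintype.card_subtype_compl (fun b : F => b = 0)
    simp only [Fintype.card_subtype_eq] at this
    rw [this, hq]
  rw [hF, hB, hsub]
  have hq1 : 1 ≤ q := by
    rw [← hq]
    exact Fintype.card_pos
  obtain ⟨k, rfl⟩ := Nat.exists_eq_add_of_le hq1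
  have e : 1 + k - 1 = k := by omega
  rw [e]
  ring

private lemma Gu_mul_Gu (a b c : F) :
    ((Gu a b c * Gu (1 - a) (-b) (-c) : GL (Fin 4) F) : Matrix (Fin 4) (Fin 4) F) = Cm F := by
  show Gm a b c * Gm (1 - a) (-b) (-c) = Cm F
  ext i j
  fin_cases i <;> fin_cases j <;>
    simp [Gm, Cm, Matrix.mul_apply, Fin.sum_univ_four,
      Matrix.vecHead, Matrix.vecTail] <;> ring

private lemma Gu_val (a b c : F) :
    ((Gu a b c : GL (Fin 4) F) : Matrix (Fin 4) (Fin 4) F) = Gm a b c := rfl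

private lemma Gm_e01 (a b c : F) : Gm a b c 0 1 = a := by simp [Gm]
private lemma Gm_e03 (a b c : F) : Gm a b c 0 3 = b := by simp [Gm]
private lemma Gm_e21 (a b c : F) : Gm a b c 2 1 = c := by
  simp [Gm, Matrix.vecHead, Matrix.vecTail]

/-- The number of pairs `(g, h)` in `GL_4(𝔽_q)` with `g ∼ J_2(1) ⊕ I_2`,
`h ∼ J_2(1) ⊕ I_2` and `g·h = J_2(1) ⊕ J_2(1)` equals `q² + q`. This is the
structure constant `a^{(1²)_{t-1}}_{(1)_{t-1}, (1)_{t-1}}` of the stable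
center. -/
theorem structure_constant_J2J2 (q : ℕ) (hq : Fintype.card F = q) :
    Nat.card {gh : GL (Fin 4) F × GL (Fin 4) F |
      (∃ z : GL (Fin 4) F,
        ((z * gh.1 * z⁻¹ : GL (Fin 4) F) : Matrix (Fin 4) (Fin 4) F) =
          !![1, 1, 0, 0; 0, 1, 0, 0; 0, 0, 1, 0; 0, 0, 0, 1]) ∧
      (∃ z : GL (Fin 4) F,
        ((z * gh.2 * z⁻¹ : GL (Fin 4) F) : Matrix (Fin 4) (Fin 4) F) =
          !![1, 1, 0, 0; 0, 1, 0, 0; 0, 0, 1, 0; 0, 0, 0, 1]) ∧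
      ((gh.1 * gh.2 : GL (Fin 4) F) : Matrix (Fin 4) (Fin 4) F) =
        !![1, 1, 0, 0; 0, 1, 0, 0; 0, 0, 1, 1; 0, 0, 0, 1]} = q ^ 2 + q := by
  have hUmEq : (!![1, 1, 0, 0; 0, 1, 0, 0; 0, 0, 1, 0; 0, 0, 0, 1] :
      Matrix (Fin 4) (Fin 4) F) = Um F := rfl
  have hCmEq : (!![1, 1, 0, 0; 0, 1, 0, 0; 0, 0, 1, 1; 0, 0, 0, 1] :
      Matrix (Fin 4) (Fin 4) F) = Cm F := rfl
  simp only [hUmEq, hCmEq]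
  have E : {gh : GL (Fin 4) F × GL (Fin 4) F |
      (∃ z : GL (Fin 4) F,
        ((z * gh.1 * z⁻¹ : GL (Fin 4) F) : Matrix (Fin 4) (Fin 4) F) = Um F) ∧
      (∃ z : GL (Fin 4) F,
        ((z * gh.2 * z⁻¹ : GL (Fin 4) F) : Matrix (Fin 4) (Fin 4) F) = Um F) ∧
      ((gh.1 * gh.2 : GL (Fin 4) F) : Matrix (Fin 4) (Fin 4) F) = Cm F} ≃ Sol F := by
    refine
      { toFun := fun s => ⟨(((s.1.1 : GL (Fin 4) F) : Matrix (Fin 4) (Fin 4) F) 0 1,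
          ((s.1.1 : GL (Fin 4) F) : Matrix (Fin 4) (Fin 4) F) 0 3,
          ((s.1.1 : GL (Fin 4) F) : Matrix (Fin 4) (Fin 4) F) 2 1), ?_⟩
        invFun := fun p => ⟨(Gu p.1.1 p.1.2.1 p.1.2.2,
            Gu (1 - p.1.1) (-p.1.2.1) (-p.1.2.2)), ?_⟩
        left_inv := ?_
        right_inv := ?_ }
    case refine_1 =>
      obtain ⟨hgc, hhc, hghc⟩ := s.2
      obtain ⟨a, b, c, hbc, hG, hH⟩ := hard s.1.1 s.1.2 hgc hhc hghc
      rw [hG]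
      simp only [Gm_e01, Gm_e03, Gm_e21]
      exact hbc
    case refine_2 =>
      obtain ⟨⟨a, b, c⟩, hp⟩ := p
      simp only at hp ⊢
      refine ⟨exists_conj a b c hp, exists_conj (1 - a) (-b) (-c) (by linear_combination hp), ?_⟩
      exact Gu_mul_Gu a b c
    case refine_3 =>
      intro s
      obtain ⟨hgc, hhc, hghc⟩ := s.2
      obtain ⟨a, b, c, hbc, hG, hH⟩ := hard s.1.1 s.1.2 hgc hhc hghc
      apply Subtype.ext
      have ea : ((s.1.1 : GL (Fin 4) F) : Matrix (Fin 4) (Fin 4) F) 0 1 = a := by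
        rw [hG, Gm_e01]
      have eb : ((s.1.1 : GL (Fin 4) F) : Matrix (Fin 4) (Fin 4) F) 0 3 = b := by
        rw [hG, Gm_e03]
      have ec : ((s.1.1 : GL (Fin 4) F) : Matrix (Fin 4) (Fin 4) F) 2 1 = c := by
        rw [hG, Gm_e21]
      simp only [ea, eb, ec]
      refine Prod.ext ?_ ?_
      · exact Units.ext (by rw [Gu_val, ← hG])
      · exact Units.ext (by rw [Gu_val, ← hH])
    case refine_4 =>
      intro p
      obtain ⟨⟨a, b, c⟩, hp⟩ := p
      apply Subtype.ext
      simp only [Gu_val, Gm_e01, Gm_e03, Gm_e21]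
  rw [Nat.card_congr E, card_sol q hq]
end

section
/- Let d ≥ 1 and let ξ₁, ξ₂, …, ξ_d ∈ 𝔽_q \ {0, 1} be pairwise distinct. Then the number of ordered pairs (g, h) ∈ GL_d(𝔽_q) × GL_d(𝔽_q) such that g is conjugate to diag(ξ₁, 1, …, 1), h is conjugate to diag(ξ₂, …, ξ_d, 1), and g·h = diag(ξ₁, ξ₂, …, ξ_d), equals (2q − 1)^{d−1}. (This is the structure constant a^{λ∪μ}_{λμ} for λ = (1)_{t−ξ₁} and μ = (1)_{t−ξ₂} ∪ ⋯ ∪ (1)_{t−ξ_d}, in the case that 1 is not among the ξ_i.) -/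
open Matrix
set_option linter.unusedSectionVars false
set_option linter.unusedVariables false
set_option maxHeartbeats 1600000

variable {F : Type*} [Field F] [Fintype F] [DecidableEq F]

namespace SCAux

variable {n : Type*} [Fintype n] [DecidableEq n]

theorem vmv_mul_vmv (a b c d : n → F) :
    vecMulVec a b * vecMulVec c d = (b ⬝ᵥ c) • vecMulVec a d := by
  ext i j
  simp only [mul_apply, vecMulVec_apply, Matrix.smul_apply, smul_eq_mul, dotProduct, Finset.sum_mul]
  apply Finset.sum_congr rfl
  intros; ring

theorem mul_vmv (M : Matrix n n F) (a b : n → F) :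
    M * vecMulVec a b = vecMulVec (M *ᵥ a) b := by
  ext i j
  simp only [mul_apply, vecMulVec_apply, mulVec, dotProduct, Finset.sum_mul]
  apply Finset.sum_congr rfl
  intros; ring

theorem vmv_mul (a b : n → F) (M : Matrix n n F) :
    vecMulVec a b * M = vecMulVec a (b ᵥ* M) := by
  ext i j
  simp only [mul_apply, vecMulVec_apply, vecMul, dotProduct, Finset.mul_sum]
  apply Finset.sum_congr rfl
  intros; ring

theorem vmv_mulVec (a b x : n → F) :
    vecMulVec a b *ᵥ x = (b ⬝ᵥ x) • a := by
  ext i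
  simp only [mulVec, vecMulVec_apply, dotProduct, Pi.smul_apply, smul_eq_mul, Finset.sum_mul]
  apply Finset.sum_congr rfl
  intros; ring

theorem trace_vmv (a b : n → F) : (vecMulVec a b).trace = a ⬝ᵥ b := rfl

theorem vmv_smul_right (a b : n → F) (c : F) :
    vecMulVec a (c • b) = c • vecMulVec a b := by
  ext i j; simp only [vecMulVec_apply, Pi.smul_apply, Matrix.smul_apply, smul_eq_mul]; ring

theorem vmv_smul_left (a b : n → F) (c : F) :
    vecMulVec (c • a) b = c • vecMulVec a b := by
  ext i j; simp only [vecMulVec_apply, Pi.smul_apply, Matrix.smul_apply, smul_eq_mul]; ring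

theorem vmv_sub_left (a a' b : n → F) :
    vecMulVec (a - a') b = vecMulVec a b - vecMulVec a' b := by
  ext i j; simp only [vecMulVec_apply, Pi.sub_apply, Matrix.sub_apply]; ring

theorem vmv_sub_right (a b b' : n → F) :
    vecMulVec a (b - b') = vecMulVec a b - vecMulVec a b' := by
  ext i j; simp only [vecMulVec_apply, Pi.sub_apply, Matrix.sub_apply]; ring

theorem vmv_add_left (a a' b : n → F) :
    vecMulVec (a + a') b = vecMulVec a b + vecMulVec a' b := by
  ext i j; simp only [vecMulVec_apply, Pi.add_apply, Matrix.add_apply]; ring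

theorem vmv_add_right (a b b' : n → F) :
    vecMulVec a (b + b') = vecMulVec a b + vecMulVec a b' := by
  ext i j; simp only [vecMulVec_apply, Pi.add_apply, Matrix.add_apply]; ring

section Main

variable {m : ℕ} (ξ v w : Fin (m + 1) → F)

noncomputable def aF : Fin (m + 1) → F := fun i => if (i : ℕ) = 0 then ξ 0 else 1

noncomputable def bF : Fin (m + 1) → F := fun i =>
  if h : (i : ℕ) + 1 < m + 1 then ξ ⟨(i : ℕ) + 1, h⟩ else 1

theorem dot_wv (hv0 : v 0 = 1) (hw0 : w 0 = ξ 0 - 1)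
    (hvw : ∀ i, i ≠ 0 → v i * w i = 0) : w ⬝ᵥ v = ξ 0 - 1 := by
  unfold dotProduct
  rw [Finset.sum_eq_single 0]
  · rw [hv0, hw0, mul_one]
  · intro j _ hj
    rw [mul_comm]; exact hvw j hj
  · intro h; exact absurd (Finset.mem_univ 0) h

theorem dot_e0v (hv0 : v 0 = 1) : (Pi.single 0 1 : Fin (m+1) → F) ⬝ᵥ v = 1 := by
  rw [single_dotProduct, hv0, mul_one]

theorem dot_we0 (hw0 : w 0 = ξ 0 - 1) :
    w ⬝ᵥ (Pi.single 0 1 : Fin (m+1) → F) = ξ 0 - 1 := by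
  rw [dotProduct_single, hw0, mul_one]

theorem dot_e0e0 : (Pi.single 0 1 : Fin (m+1) → F) ⬝ᵥ (Pi.single 0 1) = 1 := by
  rw [single_dotProduct, one_mul, Pi.single_eq_same]

theorem diag_aF :
    diagonal (aF ξ) =
      1 + (ξ 0 - 1) • vecMulVec (Pi.single 0 1 : Fin (m+1) → F) (Pi.single 0 1) := by
  ext i j
  rcases eq_or_ne i j with rfl | hij
  · by_cases hi : i = 0
    · subst hi
      simp [aF, diagonal_apply_eq, vecMulVec_apply]
    · have : (i : ℕ) ≠ 0 := fun h => hi (Fin.ext h)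
      simp [aF, this, vecMulVec_apply, Pi.single_apply, hi]
  · have h1 : ¬(i = 0 ∧ j = 0) := by
      rintro ⟨rfl, rfl⟩; exact hij rfl
    simp only [diagonal_apply_ne _ hij, Matrix.add_apply, one_apply_ne hij, Matrix.smul_apply,
      vecMulVec_apply, Pi.single_apply, smul_eq_mul]
    by_cases hi : i = 0
    · have hj : ¬ j = 0 := fun hj => h1 ⟨hi, hj⟩
      simp [hi, hj]
    · simp [hi]

theorem g_mul_ginv (hξ0 : ξ 0 ≠ 0) (hwv : w ⬝ᵥ v = ξ 0 - 1) :
    (1 + vecMulVec v w) * (1 - (ξ 0)⁻¹ • vecMulVec v w) = 1 := by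
  simp only [mul_sub, sub_mul, mul_add, add_mul, mul_one, one_mul, mul_smul_comm,
    smul_mul_assoc, vmv_mul_vmv, hwv, smul_smul]
  match_scalars <;> (try field_simp) <;> (try ring)

theorem ginv_mul_g (hξ0 : ξ 0 ≠ 0) (hwv : w ⬝ᵥ v = ξ 0 - 1) :
    (1 - (ξ 0)⁻¹ • vecMulVec v w) * (1 + vecMulVec v w) = 1 := by
  simp only [mul_sub, sub_mul, mul_add, add_mul, mul_one, one_mul, mul_smul_comm,
    smul_mul_assoc, vmv_mul_vmv, hwv, smul_smul]
  match_scalars <;> (try field_simp) <;> (try ring)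

theorem forward_g_conj (hξ0 : ξ 0 ≠ 0) (hξ1 : ξ 0 - 1 ≠ 0) (hv0 : v 0 = 1)
    (hw0 : w 0 = ξ 0 - 1) (hvw : ∀ i, i ≠ 0 → v i * w i = 0) :
    ∃ P Q : Matrix (Fin (m+1)) (Fin (m+1)) F, P * Q = 1 ∧ Q * P = 1 ∧
      (1 + vecMulVec v w) * P = P * diagonal (aF ξ) := by
  have hwv := dot_wv ξ v w hv0 hw0 hvw
  have he0v := dot_e0v v hv0
  have hwe0 := dot_we0 ξ w hw0
  have he0e0 : (Pi.single 0 1 : Fin (m+1) → F) ⬝ᵥ (Pi.single 0 1) = 1 := dot_e0e0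
  set e : Fin (m+1) → F := Pi.single 0 1 with he
  refine ⟨1 + vecMulVec (v - e) e - vecMulVec e ((ξ 0 - 1)⁻¹ • w - e),
    1 - vecMulVec (v - e) e + vecMulVec e ((ξ 0 - 1)⁻¹ • w - e)
      - vecMulVec (v - e) ((ξ 0 - 1)⁻¹ • w - e), ?_, ?_, ?_⟩
  · simp only [mul_sub, sub_mul, mul_add, add_mul, mul_one, one_mul, mul_smul_comm,
      smul_mul_assoc, smul_sub, smul_add, vmv_sub_left, vmv_sub_right, vmv_add_left,
      vmv_add_right, vmv_smul_left, vmv_smul_right, vmv_mul_vmv, smul_smul,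
      dotProduct_sub, sub_dotProduct, dotProduct_smul, smul_dotProduct, smul_eq_mul,
      hwv, he0v, hwe0, he0e0]
    match_scalars <;> (try field_simp) <;> (try ring)
  · simp only [mul_sub, sub_mul, mul_add, add_mul, mul_one, one_mul, mul_smul_comm,
      smul_mul_assoc, smul_sub, smul_add, vmv_sub_left, vmv_sub_right, vmv_add_left,
      vmv_add_right, vmv_smul_left, vmv_smul_right, vmv_mul_vmv, smul_smul,
      dotProduct_sub, sub_dotProduct, dotProduct_smul, smul_dotProduct, smul_eq_mul,
      hwv, he0v, hwe0, he0e0]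
    match_scalars <;> (try field_simp) <;> (try ring)
  · rw [diag_aF, ← he]
    simp only [mul_sub, sub_mul, mul_add, add_mul, mul_one, one_mul, mul_smul_comm,
      smul_mul_assoc, smul_sub, smul_add, vmv_sub_left, vmv_sub_right, vmv_add_left,
      vmv_add_right, vmv_smul_left, vmv_smul_right, vmv_mul_vmv, smul_smul,
      dotProduct_sub, sub_dotProduct, dotProduct_smul, smul_dotProduct, smul_eq_mul,
      hwv, he0v, hwe0, he0e0]
    match_scalars <;> (try field_simp) <;> (try ring)

theorem eigen_one (h0 : ∀ i, ξ i ≠ 0) (h1 : ∀ i, ξ i ≠ 1) (hv0 : v 0 = 1)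
    (hw0 : w 0 = ξ 0 - 1) (hvw : ∀ i, i ≠ 0 → v i * w i = 0) :
    ((1 - (ξ 0)⁻¹ • vecMulVec v w) * diagonal ξ) *ᵥ (fun j => v j / (ξ j - 1)) =
      (fun j => v j / (ξ j - 1)) := by
  set u : Fin (m+1) → F := fun j => v j / (ξ j - 1) with hu
  rw [← mulVec_mulVec]
  have hdu : diagonal ξ *ᵥ u = fun j => ξ j * u j := by
    ext j; rw [mulVec_diagonal]
  rw [hdu]
  have hscal : w ⬝ᵥ (fun j => ξ j * u j) = ξ 0 := by
    unfold dotProduct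
    rw [Finset.sum_eq_single 0]
    · have : ξ 0 - 1 ≠ 0 := sub_ne_zero.mpr (h1 0)
      simp only [hu, hv0, hw0]
      field_simp
    · intro j _ hj
      rcases mul_eq_zero.mp (hvw j hj) with h | h <;> simp [hu, h]
    · intro h; exact absurd (Finset.mem_univ 0) h
  rw [sub_mulVec, one_mulVec, smul_mulVec, vmv_mulVec, hscal]
  ext j
  have hj1 : ξ j - 1 ≠ 0 := sub_ne_zero.mpr (h1 j)
  have hξ0 : ξ 0 ≠ 0 := h0 0
  simp only [Pi.sub_apply, Pi.smul_apply, smul_eq_mul, hu]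
  field_simp
  ring

theorem eigen_k (hinj : Function.Injective ξ) (h0 : ∀ i, ξ i ≠ 0) (h1 : ∀ i, ξ i ≠ 1)
    (hv0 : v 0 = 1) (hw0 : w 0 = ξ 0 - 1) (hvw : ∀ i, i ≠ 0 → v i * w i = 0)
    (k : Fin (m+1)) (hk : k ≠ 0) :
    ((1 - (ξ 0)⁻¹ • vecMulVec v w) * diagonal ξ) *ᵥ
      (fun j => if j = k then 1 else
        ξ k * w k * (ξ 0 - ξ k) / (ξ 0 * (1 - ξ k)) * v j / (ξ j - ξ k)) =
      ξ k • (fun j => if j = k then 1 else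
        ξ k * w k * (ξ 0 - ξ k) / (ξ 0 * (1 - ξ k)) * v j / (ξ j - ξ k)) := by
  have hξ0 : ξ 0 ≠ 0 := h0 0
  have hξk0 : ξ k ≠ 0 := h0 k
  have h0k : ξ 0 - ξ k ≠ 0 := sub_ne_zero.mpr (hinj.ne (Ne.symm hk))
  have h1k : 1 - ξ k ≠ 0 := sub_ne_zero.mpr (Ne.symm (h1 k))
  set α : F := ξ k * w k * (ξ 0 - ξ k) / (ξ 0 * (1 - ξ k)) with hα
  set u : Fin (m+1) → F := fun j => if j = k then 1 else α * v j / (ξ j - ξ k) with hu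
  rw [← mulVec_mulVec]
  have hdu : diagonal ξ *ᵥ u = fun j => ξ j * u j := by
    ext j; rw [mulVec_diagonal]
  rw [hdu]
  have hscal : w ⬝ᵥ (fun j => ξ j * u j) = ξ 0 * α := by
    unfold dotProduct
    rw [← Finset.sum_erase_add _ _ (Finset.mem_univ k)]
    rw [Finset.sum_eq_single_of_mem (0 : Fin (m+1))
      (Finset.mem_erase.mpr ⟨Ne.symm hk, Finset.mem_univ 0⟩)]
    · have hk0 : (0 : Fin (m+1)) ≠ k := Ne.symm hk
      simp only [hu, if_neg hk0, if_pos rfl, hv0, hw0, mul_one]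
      rw [hα]
      field_simp
      ring
    · intro j hj hj0
      have hjk : j ≠ k := (Finset.mem_erase.mp hj).1
      rcases mul_eq_zero.mp (hvw j hj0) with h | h <;> simp [hu, if_neg hjk, h]
  rw [sub_mulVec, one_mulVec, smul_mulVec, vmv_mulVec, hscal]
  ext j
  simp only [Pi.sub_apply, Pi.smul_apply, smul_eq_mul, hu]
  rcases eq_or_ne j k with rfl | hjk
  · have hz : α * v j = 0 := by
      rcases mul_eq_zero.mp (hvw j hk) with h | h
      · rw [h, mul_zero]
      · rw [hα, h]; simp
    simp only [if_pos rfl, mul_one]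
    rw [mul_assoc, hz, mul_zero, mul_zero, sub_zero]
  · have hjmk : ξ j - ξ k ≠ 0 := sub_ne_zero.mpr (hinj.ne hjk)
    simp only [if_neg hjk]
    field_simp
    ring

noncomputable def P2 : Matrix (Fin (m+1)) (Fin (m+1)) F := fun j i =>
  if h : (i : ℕ) + 1 < m + 1 then
    (if j = (⟨(i : ℕ) + 1, h⟩ : Fin (m+1)) then 1 else
      ξ ⟨(i : ℕ) + 1, h⟩ * w ⟨(i : ℕ) + 1, h⟩ * (ξ 0 - ξ ⟨(i : ℕ) + 1, h⟩) /
        (ξ 0 * (1 - ξ ⟨(i : ℕ) + 1, h⟩)) * v j / (ξ j - ξ ⟨(i : ℕ) + 1, h⟩))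
  else v j / (ξ j - 1)

theorem bF_injective (hinj : Function.Injective ξ) (h1 : ∀ i, ξ i ≠ 1) :
    Function.Injective (bF ξ) := by
  intro i i' hii
  unfold bF at hii
  split_ifs at hii with h h' h'
  · have h2 := hinj hii
    have h3 : (i : ℕ) = (i' : ℕ) := by
      have := congrArg Fin.val h2
      simpa using this
    exact Fin.ext h3
  · exact absurd hii (h1 _)
  · exact absurd hii.symm (h1 _)
  · have hi := i.isLt
    have hi' := i'.isLt
    exact Fin.ext (by omega)

theorem col_P2_eigen (hinj : Function.Injective ξ) (h0 : ∀ i, ξ i ≠ 0)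
    (h1 : ∀ i, ξ i ≠ 1) (hv0 : v 0 = 1) (hw0 : w 0 = ξ 0 - 1)
    (hvw : ∀ i, i ≠ 0 → v i * w i = 0) (i : Fin (m+1)) :
    ((1 - (ξ 0)⁻¹ • vecMulVec v w) * diagonal ξ) *ᵥ (fun j => P2 ξ v w j i) =
      bF ξ i • (fun j => P2 ξ v w j i) := by
  by_cases hi : (i : ℕ) + 1 < m + 1
  · have hk : (⟨(i : ℕ) + 1, hi⟩ : Fin (m+1)) ≠ 0 := by
      intro h
      have := congrArg Fin.val h
      simp at this
    have hcol : (fun j => P2 ξ v w j i) = (fun j => if j = (⟨(i : ℕ) + 1, hi⟩ : Fin (m+1)) then 1 else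
        ξ ⟨(i : ℕ) + 1, hi⟩ * w ⟨(i : ℕ) + 1, hi⟩ * (ξ 0 - ξ ⟨(i : ℕ) + 1, hi⟩) /
          (ξ 0 * (1 - ξ ⟨(i : ℕ) + 1, hi⟩)) * v j / (ξ j - ξ ⟨(i : ℕ) + 1, hi⟩)) := by
      funext j; simp only [P2, dif_pos hi]
    have hbi : bF ξ i = ξ ⟨(i : ℕ) + 1, hi⟩ := by simp only [bF, dif_pos hi]
    rw [hcol, hbi]
    exact eigen_k ξ v w hinj h0 h1 hv0 hw0 hvw _ hk
  · have hcol : (fun j => P2 ξ v w j i) = (fun j => v j / (ξ j - 1)) := by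
      funext j; simp only [P2, dif_neg hi]
    have hbi : bF ξ i = 1 := by simp only [bF, dif_neg hi]
    rw [hcol, hbi, one_smul]
    exact eigen_one ξ v w h0 h1 hv0 hw0 hvw

theorem col_P2_ne_zero (h1 : ∀ i, ξ i ≠ 1) (hv0 : v 0 = 1) (i : Fin (m+1)) :
    (fun j => P2 ξ v w j i) ≠ 0 := by
  intro hz
  by_cases hi : (i : ℕ) + 1 < m + 1
  · have := congrFun hz (⟨(i : ℕ) + 1, hi⟩ : Fin (m+1))
    simp only [P2, dif_pos hi, if_pos rfl, Pi.zero_apply] at this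
    exact one_ne_zero this
  · have := congrFun hz 0
    simp only [P2, dif_neg hi, Pi.zero_apply, hv0] at this
    have hne : ξ 0 - 1 ≠ 0 := sub_ne_zero.mpr (h1 0)
    rw [div_eq_zero_iff] at this
    rcases this with h | h
    · exact one_ne_zero h
    · exact hne h

theorem forward_h_conj (hinj : Function.Injective ξ) (h0 : ∀ i, ξ i ≠ 0)
    (h1 : ∀ i, ξ i ≠ 1) (hv0 : v 0 = 1) (hw0 : w 0 = ξ 0 - 1)
    (hvw : ∀ i, i ≠ 0 → v i * w i = 0) :
    ∃ P : Matrix (Fin (m+1)) (Fin (m+1)) F, IsUnit P ∧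
      ((1 - (ξ 0)⁻¹ • vecMulVec v w) * diagonal ξ) * P = P * diagonal (bF ξ) := by
  refine ⟨P2 ξ v w, ?_, ?_⟩
  · -- IsUnit via eigenvector independence
    have hcols : LinearIndependent F (fun i => (fun j => P2 ξ v w j i)) := by
      apply Module.End.eigenvectors_linearIndependent'
        (Matrix.mulVecLin ((1 - (ξ 0)⁻¹ • vecMulVec v w) * diagonal ξ)) (bF ξ)
        (bF_injective ξ hinj h1)
      intro i
      rw [Module.End.hasEigenvector_iff]
      constructor
      · rw [Module.End.mem_eigenspace_iff]
        show Matrix.mulVecLin _ _ = _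
        rw [Matrix.mulVecLin_apply]
        exact col_P2_eigen ξ v w hinj h0 h1 hv0 hw0 hvw i
      · exact col_P2_ne_zero ξ v w h1 hv0 i
    rw [Matrix.isUnit_iff_isUnit_det, isUnit_iff_ne_zero]
    intro hdet
    obtain ⟨x, hx0, hx⟩ := (Matrix.exists_mulVec_eq_zero_iff).mpr hdet
    have hsum : ∑ i, x i • (fun j => P2 ξ v w j i) = 0 := by
      funext j
      have := congrFun hx j
      simp only [mulVec, dotProduct, Pi.zero_apply] at this
      rw [Finset.sum_apply]
      simp only [Pi.smul_apply, smul_eq_mul, Pi.zero_apply]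
      rw [← this]
      apply Finset.sum_congr rfl
      intros; ring
    have := Fintype.linearIndependent_iff.mp hcols x hsum
    exact hx0 (funext fun i => this i)
  · -- eigen equation as matrix identity
    ext j i
    have hL : (((1 - (ξ 0)⁻¹ • vecMulVec v w) * diagonal ξ) * P2 ξ v w) j i
        = (((1 - (ξ 0)⁻¹ • vecMulVec v w) * diagonal ξ) *ᵥ (fun j' => P2 ξ v w j' i)) j := by
      simp only [mul_apply, mulVec, dotProduct]
    rw [hL, mul_diagonal, col_P2_eigen ξ v w hinj h0 h1 hv0 hw0 hvw i]
    simp only [Pi.smul_apply, smul_eq_mul]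
    ring

theorem diag_mul_inv_diag (h0 : ∀ i, ξ i ≠ 0) :
    diagonal ξ * diagonal (fun i => (ξ i)⁻¹) = 1 := by
  rw [diagonal_mul_diagonal]
  have : (fun i => ξ i * (ξ i)⁻¹) = fun _ : Fin (m+1) => (1 : F) :=
    funext fun i => mul_inv_cancel₀ (h0 i)
  rw [this, diagonal_one]

theorem inv_diag_mul_diag (h0 : ∀ i, ξ i ≠ 0) :
    diagonal (fun i => (ξ i)⁻¹) * diagonal ξ = 1 := by
  rw [diagonal_mul_diagonal]
  have : (fun i => (ξ i)⁻¹ * ξ i) = fun _ : Fin (m+1) => (1 : F) :=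
    funext fun i => inv_mul_cancel₀ (h0 i)
  rw [this, diagonal_one]

theorem conj_coe {u z : GL (Fin (m+1)) F} {Dm : Matrix (Fin (m+1)) (Fin (m+1)) F}
    (hz : ((z * u * z⁻¹ : GL (Fin (m+1)) F) : Matrix (Fin (m+1)) (Fin (m+1)) F) = Dm) :
    (u : Matrix (Fin (m+1)) (Fin (m+1)) F)
      = (↑z⁻¹ : Matrix (Fin (m+1)) (Fin (m+1)) F) * Dm * (↑z : Matrix (Fin (m+1)) (Fin (m+1)) F) := by
  have h1 : (z⁻¹ * (z * u * z⁻¹) * z : GL (Fin (m+1)) F) = u := by group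
  have h2 : ((z⁻¹ * (z * u * z⁻¹) * z : GL (Fin (m+1)) F) : Matrix (Fin (m+1)) (Fin (m+1)) F)
      = (↑z⁻¹ : Matrix (Fin (m+1)) (Fin (m+1)) F) * Dm * (↑z : Matrix (Fin (m+1)) (Fin (m+1)) F) := by
    rw [Units.val_mul, Units.val_mul, hz]
  rw [← h2, h1]

theorem backward_vw_zero {g h : GL (Fin (m+1)) F} (v' w' : Fin (m+1) → F)
    (hinj : Function.Injective ξ) (h0 : ∀ i, ξ i ≠ 0)
    (hG : (g : Matrix (Fin (m+1)) (Fin (m+1)) F) = 1 + vecMulVec v' w')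
    (z2 : GL (Fin (m+1)) F)
    (hz2 : ((z2 * h * z2⁻¹ : GL (Fin (m+1)) F) : Matrix (Fin (m+1)) (Fin (m+1)) F)
        = diagonal (bF ξ))
    (hgh : (g : Matrix (Fin (m+1)) (Fin (m+1)) F) * (h : Matrix (Fin (m+1)) (Fin (m+1)) F)
        = diagonal ξ)
    (k : Fin (m+1)) (hk : k ≠ 0) : v' k * w' k = 0 := by
  have hh := conj_coe hz2
  have hkpos : 0 < (k : ℕ) := by
    rcases Nat.eq_zero_or_pos (k : ℕ) with h | h
    · exact absurd (Fin.ext h) hk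
    · exact h
  have hklt := k.isLt
  set i : Fin (m+1) := ⟨(k : ℕ) - 1, by omega⟩ with hi
  have hilt : (i : ℕ) + 1 < m + 1 := by simp only [hi]; omega
  have hbik : bF ξ i = ξ k := by
    simp only [bF, dif_pos hilt]
    congr 1
    exact Fin.ext (by simp only [hi]; omega)
  set u : Fin (m+1) → F := (↑z2⁻¹ : Matrix (Fin (m+1)) (Fin (m+1)) F) *ᵥ Pi.single i 1 with hu
  have hBu : diagonal (bF ξ) *ᵥ Pi.single i 1 = ξ k • (Pi.single i 1 : Fin (m+1) → F) := by
    ext j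
    rw [mulVec_diagonal]
    rcases eq_or_ne j i with rfl | hji
    · simp [hbik]
    · simp [Pi.single_eq_of_ne hji]
  have hhu : (h : Matrix (Fin (m+1)) (Fin (m+1)) F) *ᵥ u = ξ k • u := by
    rw [hh, hu, mulVec_mulVec, mul_assoc, mul_assoc, Units.mul_inv, mul_one,
      ← mulVec_mulVec, hBu, mulVec_smul]
  have hune : u ≠ 0 := by
    intro h0u
    have h2 : (↑z2 : Matrix (Fin (m+1)) (Fin (m+1)) F) *ᵥ u = Pi.single i 1 := by
      rw [hu, mulVec_mulVec, Units.mul_inv, one_mulVec]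
    rw [h0u, mulVec_zero] at h2
    have := congrFun h2 i
    simp at this
  have hcomp : ∀ j, ξ k * (u j + (w' ⬝ᵥ u) * v' j) = ξ j * u j := by
    have h2 : (↑g : Matrix (Fin (m+1)) (Fin (m+1)) F) *ᵥ
        ((↑h : Matrix (Fin (m+1)) (Fin (m+1)) F) *ᵥ u) = diagonal ξ *ᵥ u := by
      rw [mulVec_mulVec, hgh]
    rw [hhu, mulVec_smul, hG, add_mulVec, one_mulVec, vmv_mulVec] at h2
    intro j
    have h3 := congrFun h2 j
    simp only [Pi.smul_apply, Pi.add_apply, smul_eq_mul, mulVec_diagonal] at h3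
    exact h3
  have hbk : (w' ⬝ᵥ u) * v' k = 0 := by
    have h4 : u k + (w' ⬝ᵥ u) * v' k = u k := mul_left_cancel₀ (h0 k) (hcomp k)
    linear_combination h4
  by_cases hβ : w' ⬝ᵥ u = 0
  · have huj : ∀ j, j ≠ k → u j = 0 := by
      intro j hj
      have h3 := hcomp j
      rw [hβ, zero_mul, add_zero] at h3
      have h4 : (ξ j - ξ k) * u j = 0 := by linear_combination -h3
      rcases mul_eq_zero.mp h4 with h | h
      · exact absurd (sub_eq_zero.mp h) (hinj.ne hj)
      · exact h
    have huk : u k ≠ 0 := by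
      intro hukz
      apply hune
      funext j
      rcases eq_or_ne j k with rfl | hj
      · exact hukz
      · exact huj j hj
    have hβ2 : w' ⬝ᵥ u = w' k * u k := by
      unfold dotProduct
      rw [Finset.sum_eq_single k]
      · intro j _ hj; rw [huj j hj, mul_zero]
      · intro hmem; exact absurd (Finset.mem_univ k) hmem
    rw [hβ2] at hβ
    rcases mul_eq_zero.mp hβ with h | h
    · rw [h, mul_zero]
    · exact absurd h huk
  · have := hbk
    rcases mul_eq_zero.mp this with h | h
    · exact absurd h hβ
    · rw [h, zero_mul]

theorem backward_trace {g : GL (Fin (m+1)) F} (z : GL (Fin (m+1)) F)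
    (hz : ((z * g * z⁻¹ : GL (Fin (m+1)) F) : Matrix (Fin (m+1)) (Fin (m+1)) F)
        = diagonal (aF ξ)) :
    Matrix.trace ((g : Matrix (Fin (m+1)) (Fin (m+1)) F) - 1) = ξ 0 - 1 := by
  have hg := conj_coe hz
  have h2 : Matrix.trace (g : Matrix (Fin (m+1)) (Fin (m+1)) F)
      = Matrix.trace (diagonal (aF ξ)) := by
    rw [hg, trace_mul_comm, ← mul_assoc, Units.mul_inv, one_mul]
  rw [trace_sub, h2, diag_aF, trace_add, trace_smul, trace_vmv, dot_e0e0]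
  simp

def Tset : Type _ := {vw : (Fin (m+1) → F) × (Fin (m+1) → F) //
    vw.1 0 = 1 ∧ vw.2 0 = ξ 0 - 1 ∧ ∀ i, i ≠ 0 → vw.1 i * vw.2 i = 0}

def Sset : Set (GL (Fin (m+1)) F × GL (Fin (m+1)) F) :=
  {gh | (∃ z : GL (Fin (m+1)) F,
        ((z * gh.1 * z⁻¹ : GL (Fin (m+1)) F) : Matrix (Fin (m+1)) (Fin (m+1)) F) =
          Matrix.diagonal (aF ξ)) ∧
      (∃ z : GL (Fin (m+1)) F,
        ((z * gh.2 * z⁻¹ : GL (Fin (m+1)) F) : Matrix (Fin (m+1)) (Fin (m+1)) F) =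
          Matrix.diagonal (bF ξ)) ∧
      ((gh.1 * gh.2 : GL (Fin (m+1)) F) : Matrix (Fin (m+1)) (Fin (m+1)) F) =
        Matrix.diagonal ξ}

noncomputable def fwdFun (hξ0 : ξ 0 ≠ 0) (h0 : ∀ i, ξ i ≠ 0) (t : Tset ξ) :
    GL (Fin (m+1)) F × GL (Fin (m+1)) F :=
  let gU : GL (Fin (m+1)) F := ⟨1 + vecMulVec t.1.1 t.1.2,
    1 - (ξ 0)⁻¹ • vecMulVec t.1.1 t.1.2,
    g_mul_ginv ξ _ _ hξ0 (dot_wv ξ _ _ t.2.1 t.2.2.1 t.2.2.2),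
    ginv_mul_g ξ _ _ hξ0 (dot_wv ξ _ _ t.2.1 t.2.2.1 t.2.2.2)⟩
  (gU, gU⁻¹ * ⟨diagonal ξ, diagonal (fun i => (ξ i)⁻¹),
    diag_mul_inv_diag ξ h0, inv_diag_mul_diag ξ h0⟩)

theorem fwdFun_fst_val (hξ0 : ξ 0 ≠ 0) (h0 : ∀ i, ξ i ≠ 0) (t : Tset ξ) :
    ((fwdFun ξ hξ0 h0 t).1 : Matrix (Fin (m+1)) (Fin (m+1)) F)
      = 1 + vecMulVec t.1.1 t.1.2 := rfl

theorem fwdFun_snd_val (hξ0 : ξ 0 ≠ 0) (h0 : ∀ i, ξ i ≠ 0) (t : Tset ξ) :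
    ((fwdFun ξ hξ0 h0 t).2 : Matrix (Fin (m+1)) (Fin (m+1)) F)
      = (1 - (ξ 0)⁻¹ • vecMulVec t.1.1 t.1.2) * diagonal ξ := rfl

theorem mem_Sset (hinj : Function.Injective ξ) (h0 : ∀ i, ξ i ≠ 0) (h1 : ∀ i, ξ i ≠ 1)
    (t : Tset ξ) : fwdFun ξ (h0 0) h0 t ∈ Sset ξ := by
  have hξ0 : ξ 0 ≠ 0 := h0 0
  have hξ1 : ξ 0 - 1 ≠ 0 := sub_ne_zero.mpr (h1 0)
  refine ⟨?_, ?_, ?_⟩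
  · obtain ⟨P, Q, hPQ, hQP, hgP⟩ :=
      forward_g_conj ξ t.1.1 t.1.2 hξ0 hξ1 t.2.1 t.2.2.1 t.2.2.2
    refine ⟨(⟨P, Q, hPQ, hQP⟩ : GL (Fin (m+1)) F)⁻¹, ?_⟩
    rw [inv_inv, Units.val_mul, Units.val_mul]
    show Q * ((1 : Matrix (Fin (m+1)) (Fin (m+1)) F) + vecMulVec t.1.1 t.1.2) * P
        = diagonal (aF ξ)
    rw [mul_assoc, hgP, ← mul_assoc, hQP, one_mul]
  · obtain ⟨P, hPu, hMP⟩ :=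
      forward_h_conj ξ t.1.1 t.1.2 hinj h0 h1 t.2.1 t.2.2.1 t.2.2.2
    obtain ⟨u2, hu2⟩ := hPu
    refine ⟨u2⁻¹, ?_⟩
    rw [inv_inv, Units.val_mul, Units.val_mul, fwdFun_snd_val]
    rw [mul_assoc, hu2, hMP, ← mul_assoc, ← hu2, Units.inv_mul, one_mul]
  · show ((fwdFun ξ hξ0 h0 t).1 * ((fwdFun ξ hξ0 h0 t).1⁻¹ *
        ⟨diagonal ξ, diagonal (fun i => (ξ i)⁻¹),
          diag_mul_inv_diag ξ h0, inv_diag_mul_diag ξ h0⟩) :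
        GL (Fin (m+1)) F).val = diagonal ξ
    rw [mul_inv_cancel_left]

theorem card_S (hinj : Function.Injective ξ) (h0 : ∀ i, ξ i ≠ 0) (h1 : ∀ i, ξ i ≠ 1) :
    Nat.card (Sset ξ) = Nat.card (Tset ξ) := by
  have hξ0 : ξ 0 ≠ 0 := h0 0
  have hξ1 : ξ 0 - 1 ≠ 0 := sub_ne_zero.mpr (h1 0)
  refine (Nat.card_congr (Equiv.ofBijective
    (fun t : Tset ξ => (⟨fwdFun ξ hξ0 h0 t, mem_Sset ξ hinj h0 h1 t⟩ : Sset ξ))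
    ⟨?_, ?_⟩)).symm
  · -- injective
    intro t t' htt
    have h2 : fwdFun ξ hξ0 h0 t = fwdFun ξ hξ0 h0 t' := congrArg Subtype.val htt
    have h3 : ((fwdFun ξ hξ0 h0 t).1 : Matrix (Fin (m+1)) (Fin (m+1)) F)
        = ((fwdFun ξ hξ0 h0 t').1 : Matrix (Fin (m+1)) (Fin (m+1)) F) := by rw [h2]
    rw [fwdFun_fst_val, fwdFun_fst_val] at h3
    have h4 : vecMulVec t.1.1 t.1.2 = vecMulVec t'.1.1 t'.1.2 := add_left_cancel h3
    apply Subtype.ext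
    apply Prod.ext
    · funext i
      have h5 := congrFun (congrFun h4 i) 0
      simp only [vecMulVec_apply] at h5
      rw [t.2.2.1, t'.2.2.1] at h5
      exact mul_right_cancel₀ hξ1 h5
    · funext j
      have h5 := congrFun (congrFun h4 0) j
      simp only [vecMulVec_apply] at h5
      rw [t.2.1, t'.2.1, one_mul, one_mul] at h5
      exact h5
  · -- surjective
    rintro ⟨⟨g, h⟩, ⟨z1, hz1⟩, ⟨z2, hz2⟩, hD⟩
    have hgh : (g : Matrix (Fin (m+1)) (Fin (m+1)) F) * (h : Matrix (Fin (m+1)) (Fin (m+1)) F)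
        = diagonal ξ := hD
    have hgm := conj_coe hz1
    obtain ⟨v', hv'⟩ : ∃ v' : Fin (m+1) → F,
        v' = (ξ 0 - 1) • ((↑z1⁻¹ : Matrix (Fin (m+1)) (Fin (m+1)) F) *ᵥ Pi.single 0 1) :=
      ⟨_, rfl⟩
    obtain ⟨w', hw'⟩ : ∃ w' : Fin (m+1) → F,
        w' = (Pi.single 0 1 : Fin (m+1) → F) ᵥ* (↑z1 : Matrix (Fin (m+1)) (Fin (m+1)) F) :=
      ⟨_, rfl⟩
    have hGsub : (g : Matrix (Fin (m+1)) (Fin (m+1)) F) = 1 + vecMulVec v' w' := by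
      rw [hgm, diag_aF, mul_add, add_mul, mul_one, Units.inv_mul]
      congr 1
      rw [mul_smul_comm, smul_mul_assoc, mul_vmv, vmv_mul, ← vmv_smul_left, hv', hw']
    have hzero : ∀ k, k ≠ 0 → v' k * w' k = 0 :=
      fun k hk => backward_vw_zero ξ v' w' hinj h0 hGsub z2 hz2 hgh k hk
    have htr : v' 0 * w' 0 = ξ 0 - 1 := by
      have h1t := backward_trace ξ z1 hz1
      have h2t : Matrix.trace ((g : Matrix (Fin (m+1)) (Fin (m+1)) F) - 1)
          = v' 0 * w' 0 := by
        rw [hGsub, add_sub_cancel_left, trace_vmv]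
        unfold dotProduct
        rw [Finset.sum_eq_single 0]
        · intro j _ hj; exact hzero j hj
        · intro hmem; exact absurd (Finset.mem_univ 0) hmem
      rw [← h2t, h1t]
    have hm1 : v' 0 * w' 0 / (ξ 0 - 1) = 1 := by rw [htr, div_self hξ1]
    have hm3 : ∀ i : Fin (m+1), i ≠ 0 → v' i * w' 0 / (ξ 0 - 1) * (v' 0 * w' i) = 0 := by
      intro i hi
      rcases mul_eq_zero.mp (hzero i hi) with hcz | hcz
      · rw [hcz]; ring
      · rw [hcz]; ring
    refine ⟨(⟨(fun i => v' i * w' 0 / (ξ 0 - 1), fun j => v' 0 * w' j),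
      hm1, htr, hm3⟩ : Tset ξ), ?_⟩
    apply Subtype.ext
    have hvmv : vecMulVec (fun i => v' i * w' 0 / (ξ 0 - 1)) (fun j => v' 0 * w' j)
        = vecMulVec v' w' := by
      ext i j
      simp only [vecMulVec_apply]
      have hrw : v' i * w' 0 / (ξ 0 - 1) * (v' 0 * w' j)
          = v' i * w' j * (v' 0 * w' 0 / (ξ 0 - 1)) := by ring
      rw [hrw, htr, div_self hξ1, mul_one]
    have hfst : (fwdFun ξ hξ0 h0
        ⟨(fun i => v' i * w' 0 / (ξ 0 - 1), fun j => v' 0 * w' j), hm1, htr, hm3⟩).1 = g := by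
      apply Units.ext
      erw [fwdFun_fst_val]
      show (1 : Matrix (Fin (m+1)) (Fin (m+1)) F) + vecMulVec _ _ = _
      rw [hvmv]
      exact hGsub.symm
    refine Prod.ext hfst ?_
    show (fwdFun ξ hξ0 h0 _).1⁻¹ * _ = h
    rw [hfst]
    have hDU : g * h = (⟨diagonal ξ, diagonal (fun i => (ξ i)⁻¹),
        diag_mul_inv_diag ξ h0, inv_diag_mul_diag ξ h0⟩ : GL (Fin (m+1)) F) :=
      Units.ext hgh
    rw [← hDU, inv_mul_cancel_left]

theorem card_T : Nat.card (Tset ξ) = Nat.card {p : F × F // p.1 * p.2 = 0} ^ m := by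
  have e2 : Tset ξ ≃ (Fin m → {p : F × F // p.1 * p.2 = 0}) :=
    { toFun := fun t i => ⟨(t.1.1 i.succ, t.1.2 i.succ), t.2.2.2 i.succ (Fin.succ_ne_zero i)⟩
      invFun := fun f => ⟨(Fin.cons 1 fun i => (f i).1.1, Fin.cons (ξ 0 - 1) fun i => (f i).1.2),
        by simp, by simp, by
          intro i hi
          obtain ⟨j, rfl⟩ := Fin.eq_succ_of_ne_zero hi
          simp only [Fin.cons_succ]
          exact (f j).2⟩
      left_inv := fun t => by
        apply Subtype.ext
        refine Prod.ext ?_ ?_ <;> funext i <;> refine Fin.cases ?_ (fun j => ?_) i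
        · simp [t.2.1]
        · simp
        · simp [t.2.2.1]
        · simp
      right_inv := fun f => by
        funext i
        apply Subtype.ext
        simp [Fin.cons_succ] }
  rw [Nat.card_congr e2, Nat.card_fun]
  simp

theorem card_pairs [Fintype F] [DecidableEq F] :
    Nat.card {p : F × F // p.1 * p.2 = 0} = 2 * Fintype.card F - 1 := by
  have e3 : {p : F × F // p.1 * p.2 = 0} ≃ (F ⊕ {x : F // x ≠ 0}) :=
    { toFun := fun p => if h : p.1.1 = 0 then Sum.inl p.1.2 else Sum.inr ⟨p.1.1, h⟩
      invFun := fun s => Sum.elim (fun b => ⟨(0, b), by simp⟩) (fun a => ⟨(a.1, 0), by simp⟩) s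
      left_inv := fun p => by
        rcases p with ⟨⟨a, b⟩, hab⟩
        by_cases h : a = 0
        · subst h; simp
        · have hb : b = 0 := by
            rcases mul_eq_zero.mp hab with h' | h'
            · exact absurd h' h
            · exact h'
          subst hb; simp [h]
      right_inv := fun s => by
        rcases s with b | ⟨a, ha⟩
        · simp
        · simp [ha] }
  rw [Nat.card_congr e3, Nat.card_sum, Nat.card_eq_fintype_card, Nat.card_eq_fintype_card]
  have hu : Fintype.card {x : F // x ≠ 0} = Fintype.card F - 1 := by
    rw [← Fintype.card_units (α := F)]
    exact Fintype.card_congr unitsEquivNeZero.symm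
  rw [hu]
  have := Fintype.card_pos (α := F)
  omega

end Main
end SCAux

/-- Let `ξ₁, …, ξ_d ∈ 𝔽_q \ {0, 1}` be pairwise distinct. The number of pairs
`(g, h)` in `GL_d(𝔽_q)` with `g ∼ diag(ξ₁, 1, …, 1)`,
`h ∼ diag(ξ₂, …, ξ_d, 1)` and `g·h = diag(ξ₁, …, ξ_d)` equals `(2q - 1)^{d-1}`. -/
theorem structure_constant_union_distinct (q : ℕ) (hq : Fintype.card F = q)
    {d : ℕ} (hd : 1 ≤ d) (ξ : Fin d → F)
    (h0 : ∀ i, ξ i ≠ 0) (h1 : ∀ i, ξ i ≠ 1) (hinj : Function.Injective ξ) :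
    Nat.card {gh : GL (Fin d) F × GL (Fin d) F |
      (∃ z : GL (Fin d) F,
        ((z * gh.1 * z⁻¹ : GL (Fin d) F) : Matrix (Fin d) (Fin d) F) =
          Matrix.diagonal (fun i : Fin d => if (i : ℕ) = 0 then ξ ⟨0, hd⟩ else 1)) ∧
      (∃ z : GL (Fin d) F,
        ((z * gh.2 * z⁻¹ : GL (Fin d) F) : Matrix (Fin d) (Fin d) F) =
          Matrix.diagonal (fun i : Fin d =>
            if h : (i : ℕ) + 1 < d then ξ ⟨(i : ℕ) + 1, h⟩ else 1)) ∧
      ((gh.1 * gh.2 : GL (Fin d) F) : Matrix (Fin d) (Fin d) F) =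
        Matrix.diagonal ξ} = (2 * q - 1) ^ (d - 1) := by
  obtain ⟨m, rfl⟩ : ∃ m, d = m + 1 := ⟨d - 1, by omega⟩
  have hfun1 : (fun i : Fin (m+1) => if (i : ℕ) = 0 then ξ ⟨0, hd⟩ else 1) = SCAux.aF ξ := by
    funext i
    have h00 : (⟨0, hd⟩ : Fin (m+1)) = 0 := by ext; simp
    rw [h00]; rfl
  rw [hfun1]
  have hSeq : {gh : GL (Fin (m+1)) F × GL (Fin (m+1)) F |
      (∃ z : GL (Fin (m+1)) F,
        ((z * gh.1 * z⁻¹ : GL (Fin (m+1)) F) : Matrix (Fin (m+1)) (Fin (m+1)) F) =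
          Matrix.diagonal (SCAux.aF ξ)) ∧
      (∃ z : GL (Fin (m+1)) F,
        ((z * gh.2 * z⁻¹ : GL (Fin (m+1)) F) : Matrix (Fin (m+1)) (Fin (m+1)) F) =
          Matrix.diagonal (fun i : Fin (m+1) =>
            if h : (i : ℕ) + 1 < m + 1 then ξ ⟨(i : ℕ) + 1, h⟩ else 1)) ∧
      ((gh.1 * gh.2 : GL (Fin (m+1)) F) : Matrix (Fin (m+1)) (Fin (m+1)) F) =
        Matrix.diagonal ξ} = SCAux.Sset ξ := rfl
  rw [hSeq, SCAux.card_S ξ hinj h0 h1, SCAux.card_T ξ, SCAux.card_pairs, hq]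
  simp
end

section
/- Let c, d ≥ 1 and ξ ∈ 𝔽_q \ {0, 1}. Let N be the number of ordered pairs (g, h) ∈ GL_{c+d}(𝔽_q) × GL_{c+d}(𝔽_q) such that g is conjugate to (ξ·I_c) ⊕ I_d, h is conjugate to (ξ·I_d) ⊕ I_c, and g·h = ξ·I_{c+d}. Then N = q^{cd} · [c+d choose c]_q, where [c+d choose c]_q is the Gaussian binomial coefficient; equivalently, N · ∏_{i=1}^{c} (q^i − 1) = q^{cd} · ∏_{i=1}^{c} (q^{d+i} − 1). (This is the structure constant a^{(1^{c+d})_{t−ξ}}_{(1^c)_{t−ξ}, (1^d)_{t−ξ}} of the stable center.) -/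
open Matrix
set_option linter.unusedSectionVars false

namespace SCAux

variable {F : Type*} [Field F] [Fintype F] [DecidableEq F]

/-- A diagonal matrix with nonzero entries, as a unit. -/
def diagUnit {n : ℕ} (w : Fin n → F) (hw : ∀ i, w i ≠ 0) : GL (Fin n) F where
  val := Matrix.diagonal w
  inv := Matrix.diagonal fun i => (w i)⁻¹
  val_inv := by
    rw [Matrix.diagonal_mul_diagonal]
    have : (fun i => w i * (w i)⁻¹) = fun _ : Fin n => (1 : F) := by
      funext i; exact mul_inv_cancel₀ (hw i)
    rw [this, Matrix.diagonal_one]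
  inv_val := by
    rw [Matrix.diagonal_mul_diagonal]
    have : (fun i => (w i)⁻¹ * w i) = fun _ : Fin n => (1 : F) := by
      funext i; exact inv_mul_cancel₀ (hw i)
    rw [this, Matrix.diagonal_one]

@[simp] lemma diagUnit_val {n : ℕ} (w : Fin n → F) (hw : ∀ i, w i ≠ 0) :
    (diagUnit w hw : Matrix (Fin n) (Fin n) F) = Matrix.diagonal w := rfl

@[simp] lemma diagUnit_inv_val {n : ℕ} (w : Fin n → F) (hw : ∀ i, w i ≠ 0) :
    (((diagUnit w hw)⁻¹ : GL (Fin n) F) : Matrix (Fin n) (Fin n) F) =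
      Matrix.diagonal fun i => (w i)⁻¹ := rfl

/-- A permutation matrix as a unit. -/
def permUnit {n : ℕ} (σ : Equiv.Perm (Fin n)) : GL (Fin n) F where
  val := σ.toPEquiv.toMatrix
  inv := σ.symm.toPEquiv.toMatrix
  val_inv := by
    rw [← PEquiv.toMatrix_trans, ← Equiv.toPEquiv_trans]
    simp
  inv_val := by
    rw [← PEquiv.toMatrix_trans, ← Equiv.toPEquiv_trans]
    simp

lemma permUnit_conj_diagonal {n : ℕ} (σ : Equiv.Perm (Fin n)) (w : Fin n → F) :
    ((permUnit σ : GL (Fin n) F) : Matrix (Fin n) (Fin n) F) * Matrix.diagonal w *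
      (((permUnit σ)⁻¹ : GL (Fin n) F) : Matrix (Fin n) (Fin n) F) =
      Matrix.diagonal (w ∘ σ) := by
  show σ.toPEquiv.toMatrix * Matrix.diagonal w * σ.symm.toPEquiv.toMatrix = _
  rw [PEquiv.toMatrix_toPEquiv_mul, PEquiv.mul_toMatrix_toPEquiv, Matrix.submatrix_submatrix]
  simpa using Matrix.submatrix_diagonal w σ σ.injective

/-- Block-diagonal embedding of a pair of matrices. -/
def psi {c d : ℕ} (A : Matrix (Fin c) (Fin c) F) (B : Matrix (Fin d) (Fin d) F) :
    Matrix (Fin (c + d)) (Fin (c + d)) F :=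
  (Matrix.fromBlocks A 0 0 B).submatrix finSumFinEquiv.symm finSumFinEquiv.symm

lemma psi_mul {c d : ℕ} (A A' : Matrix (Fin c) (Fin c) F) (B B' : Matrix (Fin d) (Fin d) F) :
    psi A B * psi A' B' = psi (A * A') (B * B') := by
  unfold psi
  rw [Matrix.submatrix_mul_equiv, Matrix.fromBlocks_multiply]
  simp

lemma psi_one {c d : ℕ} :
    psi (1 : Matrix (Fin c) (Fin c) F) (1 : Matrix (Fin d) (Fin d) F) = 1 := by
  unfold psi
  rw [Matrix.fromBlocks_one, Matrix.submatrix_one_equiv]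

lemma psi_inj {c d : ℕ} {A A' : Matrix (Fin c) (Fin c) F} {B B' : Matrix (Fin d) (Fin d) F}
    (h : psi A B = psi A' B') : A = A' ∧ B = B' := by
  have h2 := congrArg
    (fun M : Matrix (Fin (c + d)) (Fin (c + d)) F =>
      M.submatrix (finSumFinEquiv (m := c) (n := d)) finSumFinEquiv) h
  simp only [psi, Matrix.submatrix_submatrix, Equiv.symm_comp_self,
    Matrix.submatrix_id_id] at h2
  constructor
  · ext i j
    simpa using congrFun (congrFun h2 (Sum.inl i)) (Sum.inl j)
  · ext i j
    simpa using congrFun (congrFun h2 (Sum.inr i)) (Sum.inr j)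

lemma diagonal_if_eq_psi {c d : ℕ} (a b : F) :
    Matrix.diagonal (fun i : Fin (c + d) => if (i : ℕ) < c then a else b) =
      psi (Matrix.diagonal fun _ : Fin c => a) (Matrix.diagonal fun _ : Fin d => b) := by
  unfold psi
  rw [Matrix.fromBlocks_diagonal, Matrix.submatrix_diagonal_equiv]
  refine congrArg Matrix.diagonal (funext fun i => ?_)
  rcases Nat.lt_or_ge (i : ℕ) c with h | h
  · have hs : finSumFinEquiv.symm i = Sum.inl (⟨(i : ℕ), h⟩ : Fin c) := by
      rw [Equiv.symm_apply_eq]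
      ext
      simp
    simp [Function.comp_def, hs, h]
  · have hi := i.isLt
    have hs : finSumFinEquiv.symm i = Sum.inr (⟨(i : ℕ) - c, by omega⟩ : Fin d) := by
      rw [Equiv.symm_apply_eq]
      ext
      simp
      omega
    simp [Function.comp_def, hs, Nat.not_lt.2 h]

lemma scalar_comm {n : ℕ} (a : F) (M : Matrix (Fin n) (Fin n) F) :
    M * Matrix.diagonal (fun _ : Fin n => a) = Matrix.diagonal (fun _ : Fin n => a) * M := by
  ext i j
  rw [Matrix.mul_diagonal, Matrix.diagonal_mul, mul_comm]

/-- The block-swap permutation. -/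
def sigmaCD (c d : ℕ) : Equiv.Perm (Fin (c + d)) where
  toFun i := if h : (i : ℕ) < d then ⟨(i : ℕ) + c, by omega⟩
    else ⟨(i : ℕ) - d, by have := i.isLt; omega⟩
  invFun j := if h : (j : ℕ) < c then ⟨(j : ℕ) + d, by omega⟩
    else ⟨(j : ℕ) - c, by have := j.isLt; omega⟩
  left_inv i := by
    have hi := i.isLt
    by_cases h : (i : ℕ) < d <;>
      · ext
        simp only [h, dif_pos, dif_neg, not_false_iff]
        split_ifs <;> simp only [Fin.val_mk] <;> omega
  right_inv j := by
    have hj := j.isLt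
    by_cases h : (j : ℕ) < c <;>
      · ext
        simp only [h, dif_pos, dif_neg, not_false_iff]
        split_ifs <;> simp only [Fin.val_mk] <;> omega

lemma if_comp_sigma {c d : ℕ} (a b : F) :
    (fun i : Fin (c + d) => if (i : ℕ) < c then a else b) ∘ (sigmaCD c d) =
      fun i : Fin (c + d) => if (i : ℕ) < d then b else a := by
  funext i
  have hi := i.isLt
  simp only [Function.comp_apply, sigmaCD, Equiv.coe_fn_mk]
  by_cases h : (i : ℕ) < d
  · rw [dif_pos h, if_pos h, if_neg (by simp only [Fin.val_mk]; omega)]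
  · rw [dif_neg h, if_neg h, if_pos (by simp only [Fin.val_mk]; omega)]

/-- Pair of invertible matrices as block-diagonal unit. -/
def blockGL {c d : ℕ} (A : GL (Fin c) F) (B : GL (Fin d) F) : GL (Fin (c + d)) F where
  val := psi (A : Matrix (Fin c) (Fin c) F) (B : Matrix (Fin d) (Fin d) F)
  inv := psi ((A⁻¹ : GL (Fin c) F) : Matrix (Fin c) (Fin c) F)
    ((B⁻¹ : GL (Fin d) F) : Matrix (Fin d) (Fin d) F)
  val_inv := by rw [psi_mul, Units.mul_inv, Units.mul_inv, psi_one]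
  inv_val := by rw [psi_mul, Units.inv_mul, Units.inv_mul, psi_one]

lemma commute_diag_block {c d : ℕ} {ξ : F} (hξ1 : ξ ≠ 1)
    (M : Matrix (Fin (c + d)) (Fin (c + d)) F)
    (hM : M * Matrix.diagonal (fun i : Fin (c + d) => if (i : ℕ) < c then ξ else 1) =
      Matrix.diagonal (fun i : Fin (c + d) => if (i : ℕ) < c then ξ else 1) * M) :
    M = psi ((M.submatrix finSumFinEquiv finSumFinEquiv).toBlocks₁₁)
          ((M.submatrix finSumFinEquiv finSumFinEquiv).toBlocks₂₂) := by
  have hzero : ∀ i j : Fin (c + d), ¬(((i : ℕ) < c) ↔ ((j : ℕ) < c)) → M i j = 0 := by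
    intro i j hij
    have h1 : (M * Matrix.diagonal (fun i : Fin (c + d) => if (i : ℕ) < c then ξ else 1)) i j =
        (Matrix.diagonal (fun i : Fin (c + d) => if (i : ℕ) < c then ξ else 1) * M) i j := by
      rw [hM]
    rw [Matrix.mul_diagonal, Matrix.diagonal_mul] at h1
    by_cases hi : (i : ℕ) < c
    · have hj : ¬ (j : ℕ) < c := by tauto
      rw [if_pos hi, if_neg hj] at h1
      have h2 : (ξ - 1) * M i j = 0 := by linear_combination -h1
      rcases mul_eq_zero.mp h2 with h3 | h3
      · exact absurd (sub_eq_zero.mp h3) hξ1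
      · exact h3
    · have hj : (j : ℕ) < c := by tauto
      rw [if_neg hi, if_pos hj] at h1
      have h2 : (ξ - 1) * M i j = 0 := by linear_combination h1
      rcases mul_eq_zero.mp h2 with h3 | h3
      · exact absurd (sub_eq_zero.mp h3) hξ1
      · exact h3
  have h12 : (M.submatrix finSumFinEquiv finSumFinEquiv).toBlocks₁₂ = 0 := by
    ext i j
    show M (finSumFinEquiv (Sum.inl i)) (finSumFinEquiv (Sum.inr j)) = 0
    apply hzero
    simp
  have h21 : (M.submatrix finSumFinEquiv finSumFinEquiv).toBlocks₂₁ = 0 := by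
    ext i j
    show M (finSumFinEquiv (Sum.inr i)) (finSumFinEquiv (Sum.inl j)) = 0
    apply hzero
    simp
  calc M = ((M.submatrix finSumFinEquiv finSumFinEquiv).submatrix
        finSumFinEquiv.symm finSumFinEquiv.symm) := by
        rw [Matrix.submatrix_submatrix, Equiv.self_comp_symm, Matrix.submatrix_id_id]
    _ = _ := by
        unfold psi
        congr 1
        conv_lhs => rw [← Matrix.fromBlocks_toBlocks (M.submatrix finSumFinEquiv finSumFinEquiv)]
        rw [h12, h21]

section numeric

lemma sum_range_id_add (c d : ℕ) :
    ∑ i ∈ Finset.range (c + d), i =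
      (∑ i ∈ Finset.range c, i) + (∑ i ∈ Finset.range d, i) + c * d := by
  induction d with
  | zero => simp
  | succ k ih =>
    rw [show c + (k + 1) = (c + k) + 1 from rfl, Finset.sum_range_succ, ih,
      Finset.sum_range_succ]
    ring

lemma prod_pow_sub (q m : ℕ) :
    ∏ i ∈ Finset.range m, (q ^ m - q ^ i) =
      q ^ (∑ i ∈ Finset.range m, i) * ∏ i ∈ Finset.range m, (q ^ (i + 1) - 1) := by
  have h1 : ∀ i ∈ Finset.range m, q ^ m - q ^ i = q ^ i * (q ^ (m - i) - 1) := by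
    intro i hi
    rw [Finset.mem_range] at hi
    rw [Nat.mul_sub, mul_one, ← pow_add]
    congr 2
    omega
  rw [Finset.prod_congr rfl h1, Finset.prod_mul_distrib]
  congr 1
  · rw [Finset.prod_pow_eq_pow_sum]
  · rw [← Finset.prod_range_reflect (fun j => q ^ (j + 1) - 1) m]
    apply Finset.prod_congr rfl
    intro i hi
    rw [Finset.mem_range] at hi
    have : m - 1 - i + 1 = m - i := by omega
    simp only [this]

lemma key_numeric (q c d : ℕ) :
    (∏ i ∈ Finset.range (c + d), (q ^ (c + d) - q ^ i)) *
        ∏ i ∈ Finset.range c, (q ^ (i + 1) - 1) =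
      q ^ (c * d) * (∏ i ∈ Finset.range c, (q ^ (d + i + 1) - 1)) *
        ((∏ i ∈ Finset.range c, (q ^ c - q ^ i)) * ∏ i ∈ Finset.range d, (q ^ d - q ^ i)) := by
  rw [prod_pow_sub, prod_pow_sub, prod_pow_sub]
  have hG : (∏ i ∈ Finset.range (c + d), (q ^ (i + 1) - 1)) =
      (∏ i ∈ Finset.range d, (q ^ (i + 1) - 1)) *
        ∏ i ∈ Finset.range c, (q ^ (d + i + 1) - 1) := by
    rw [add_comm c d, Finset.prod_range_add]
  rw [hG, sum_range_id_add, pow_add, pow_add]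
  ring

end numeric

end SCAux

variable {F : Type*} [Field F] [Fintype F] [DecidableEq F]

open SCAux in
/-- Let `ξ ∈ 𝔽_q \ {0, 1}` and `c, d ≥ 1`. The number `N` of pairs `(g, h)` in
`GL_{c+d}(𝔽_q)` with `g ∼ (ξ·I_c) ⊕ I_d`, `h ∼ (ξ·I_d) ⊕ I_c` and
`g·h = ξ·I_{c+d}` satisfies `N · ∏_{i=1}^{c} (q^i - 1) =
q^{cd} · ∏_{i=1}^{c} (q^{d+i} - 1)`, i.e. `N` is `q^{cd}` times the Gaussian
binomial coefficient `[c+d choose c]_q`. -/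
theorem structure_constant_scalar_blocks (q : ℕ) (hq : Fintype.card F = q)
    {c d : ℕ} (hc : 1 ≤ c) (hd : 1 ≤ d) (ξ : F) (hξ0 : ξ ≠ 0) (hξ1 : ξ ≠ 1) :
    Nat.card {gh : GL (Fin (c + d)) F × GL (Fin (c + d)) F |
      (∃ z : GL (Fin (c + d)) F,
        ((z * gh.1 * z⁻¹ : GL (Fin (c + d)) F) : Matrix (Fin (c + d)) (Fin (c + d)) F) =
          Matrix.diagonal (fun i : Fin (c + d) => if (i : ℕ) < c then ξ else 1)) ∧
      (∃ z : GL (Fin (c + d)) F,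
        ((z * gh.2 * z⁻¹ : GL (Fin (c + d)) F) : Matrix (Fin (c + d)) (Fin (c + d)) F) =
          Matrix.diagonal (fun i : Fin (c + d) => if (i : ℕ) < d then ξ else 1)) ∧
      ((gh.1 * gh.2 : GL (Fin (c + d)) F) : Matrix (Fin (c + d)) (Fin (c + d)) F) =
        Matrix.diagonal (fun _ : Fin (c + d) => ξ)} *
      ∏ i ∈ Finset.range c, (q ^ (i + 1) - 1) =
    q ^ (c * d) * ∏ i ∈ Finset.range c, (q ^ (d + i + 1) - 1) := by
  classical
  have hv : ∀ i : Fin (c + d), (if (i : ℕ) < c then ξ else (1 : F)) ≠ 0 := by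
    intro i; split <;> simp [hξ0]
  have hu : ∀ i : Fin (c + d), (if (i : ℕ) < d then ξ else (1 : F)) ≠ 0 := by
    intro i; split <;> simp [hξ0]
  have hs0 : ∀ _ : Fin (c + d), (ξ : F) ≠ 0 := fun _ => hξ0
  set Dg : GL (Fin (c + d)) F :=
    diagUnit (fun i : Fin (c + d) => if (i : ℕ) < c then ξ else 1) hv with hDgdef
  set Sx : GL (Fin (c + d)) F := diagUnit (fun _ : Fin (c + d) => ξ) hs0 with hSxdef
  -- the scalar unit is central
  have hcen : ∀ x : GL (Fin (c + d)) F, x * Sx = Sx * x := by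
    intro x
    refine Units.ext ?_
    rw [Units.val_mul, Units.val_mul]
    exact scalar_comm ξ _
  -- orbit membership
  have hmemT : ∀ g : GL (Fin (c + d)) F,
      g ∈ MulAction.orbit (ConjAct (GL (Fin (c + d)) F)) Dg ↔ ∃ z, z * g * z⁻¹ = Dg := by
    intro g
    rw [MulAction.mem_orbit_iff]
    constructor
    · rintro ⟨x, hx⟩
      refine ⟨(ConjAct.ofConjAct x)⁻¹, ?_⟩
      rw [← hx, ConjAct.smul_def]
      group
    · rintro ⟨z, hz⟩
      refine ⟨ConjAct.toConjAct z⁻¹, ?_⟩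
      rw [ConjAct.smul_def, ConjAct.ofConjAct_toConjAct, ← hz]
      group
  -- products with the scalar
  have hmulSx : ∀ g h : GL (Fin (c + d)) F,
      ((g * h : GL (Fin (c + d)) F) : Matrix (Fin (c + d)) (Fin (c + d)) F) =
        Matrix.diagonal (fun _ : Fin (c + d) => ξ) ↔ h = g⁻¹ * Sx := by
    intro g h
    constructor
    · intro hgh
      have h1 : g * h = Sx := Units.ext hgh
      rw [← h1]
      group
    · rintro rfl
      have h1 : g * (g⁻¹ * Sx) = Sx := by group
      rw [h1]
      rfl
  -- the second component is conjugate to the other diagonal matrix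
  have key2 : ∀ g : GL (Fin (c + d)) F, (∃ z, z * g * z⁻¹ = Dg) →
      ∃ z : GL (Fin (c + d)) F,
        ((z * (g⁻¹ * Sx) * z⁻¹ : GL (Fin (c + d)) F) : Matrix (Fin (c + d)) (Fin (c + d)) F) =
          Matrix.diagonal (fun i : Fin (c + d) => if (i : ℕ) < d then ξ else 1) := by
    rintro g ⟨z, hz⟩
    refine ⟨permUnit (sigmaCD c d) * z, ?_⟩
    have e2 : (permUnit (sigmaCD c d) * z) * (g⁻¹ * Sx) * (permUnit (sigmaCD c d) * z)⁻¹ =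
        permUnit (sigmaCD c d) * ((z * g⁻¹ * z⁻¹) * (z * Sx * z⁻¹)) *
          (permUnit (sigmaCD c d))⁻¹ := by
      group
    have e3 : z * g⁻¹ * z⁻¹ = Dg⁻¹ := by rw [← hz]; group
    have e4 : z * Sx * z⁻¹ = Sx := by rw [hcen z]; group
    rw [e2, e3, e4]
    have hXval : ((Dg⁻¹ * Sx : GL (Fin (c + d)) F) : Matrix (Fin (c + d)) (Fin (c + d)) F) =
        Matrix.diagonal (fun i : Fin (c + d) => if (i : ℕ) < c then (1 : F) else ξ) := by
      rw [Units.val_mul]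
      show Matrix.diagonal _ * Matrix.diagonal _ = _
      rw [Matrix.diagonal_mul_diagonal]
      refine congrArg Matrix.diagonal (funext fun i => ?_)
      show (if (i : ℕ) < c then ξ else 1)⁻¹ * ξ = _
      split_ifs with h
      · rw [inv_mul_cancel₀ hξ0]
      · rw [inv_one, one_mul]
    rw [Units.val_mul, Units.val_mul, hXval]
    rw [permUnit_conj_diagonal (sigmaCD c d)
      (fun i : Fin (c + d) => if (i : ℕ) < c then (1 : F) else ξ)]
    rw [if_comp_sigma]
  -- the bijection with the conjugacy class of Dg
  let e1 : {gh : GL (Fin (c + d)) F × GL (Fin (c + d)) F |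
      (∃ z : GL (Fin (c + d)) F,
        ((z * gh.1 * z⁻¹ : GL (Fin (c + d)) F) : Matrix (Fin (c + d)) (Fin (c + d)) F) =
          Matrix.diagonal (fun i : Fin (c + d) => if (i : ℕ) < c then ξ else 1)) ∧
      (∃ z : GL (Fin (c + d)) F,
        ((z * gh.2 * z⁻¹ : GL (Fin (c + d)) F) : Matrix (Fin (c + d)) (Fin (c + d)) F) =
          Matrix.diagonal (fun i : Fin (c + d) => if (i : ℕ) < d then ξ else 1)) ∧
      ((gh.1 * gh.2 : GL (Fin (c + d)) F) : Matrix (Fin (c + d)) (Fin (c + d)) F) =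
        Matrix.diagonal (fun _ : Fin (c + d) => ξ)} ≃
      MulAction.orbit (ConjAct (GL (Fin (c + d)) F)) Dg :=
    { toFun := fun x => ⟨x.1.1, (hmemT x.1.1).mpr
        ⟨x.2.1.choose, Units.ext x.2.1.choose_spec⟩⟩
      invFun := fun g => ⟨(g.1, g.1⁻¹ * Sx), by
        have hg := (hmemT g.1).mp g.2
        refine ⟨⟨hg.choose, ?_⟩, key2 g.1 hg, (hmulSx g.1 (g.1⁻¹ * Sx)).mpr rfl⟩
        rw [hg.choose_spec]
        rfl⟩
      left_inv := fun x => by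
        apply Subtype.ext
        exact Prod.ext rfl ((hmulSx x.1.1 x.1.2).mp x.2.2.2).symm
      right_inv := fun g => Subtype.ext rfl }
  -- Dg as a block matrix
  have hDg_as_psi : (Dg : Matrix (Fin (c + d)) (Fin (c + d)) F) =
      psi (Matrix.diagonal fun _ : Fin c => ξ) (Matrix.diagonal fun _ : Fin d => (1 : F)) := by
    show Matrix.diagonal _ = _
    exact diagonal_if_eq_psi ξ 1
  -- the map onto the stabilizer
  let Φ : GL (Fin c) F × GL (Fin d) F →
      MulAction.stabilizer (ConjAct (GL (Fin (c + d)) F)) Dg := fun AB =>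
    ⟨ConjAct.toConjAct (blockGL AB.1 AB.2), by
      rw [MulAction.mem_stabilizer_iff, ConjAct.smul_def, ConjAct.ofConjAct_toConjAct,
        mul_inv_eq_iff_eq_mul]
      refine Units.ext ?_
      rw [Units.val_mul, Units.val_mul]
      show psi (AB.1 : Matrix (Fin c) (Fin c) F) (AB.2 : Matrix (Fin d) (Fin d) F) *
          (Dg : Matrix (Fin (c + d)) (Fin (c + d)) F) =
        (Dg : Matrix (Fin (c + d)) (Fin (c + d)) F) *
          psi (AB.1 : Matrix (Fin c) (Fin c) F) (AB.2 : Matrix (Fin d) (Fin d) F)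
      rw [hDg_as_psi, psi_mul, psi_mul, SCAux.scalar_comm, SCAux.scalar_comm]⟩
  have hΦinj : Function.Injective Φ := by
    intro A B h
    have h1 : ConjAct.toConjAct (blockGL A.1 A.2) = ConjAct.toConjAct (blockGL B.1 B.2) :=
      congrArg Subtype.val h
    have h2 : blockGL A.1 A.2 = blockGL B.1 B.2 := ConjAct.toConjAct.injective h1
    have h3 : psi (A.1 : Matrix (Fin c) (Fin c) F) (A.2 : Matrix (Fin d) (Fin d) F) =
        psi (B.1 : Matrix (Fin c) (Fin c) F) (B.2 : Matrix (Fin d) (Fin d) F) :=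
      congrArg Units.val h2
    obtain ⟨hA, hB⟩ := psi_inj h3
    exact Prod.ext (Units.ext hA) (Units.ext hB)
  have hΦsurj : Function.Surjective Φ := by
    rintro ⟨x, hx⟩
    rw [MulAction.mem_stabilizer_iff, ConjAct.smul_def, mul_inv_eq_iff_eq_mul] at hx
    set z : GL (Fin (c + d)) F := ConjAct.ofConjAct x with hzdef
    have hxinv : z⁻¹ * Dg = Dg * z⁻¹ := (Commute.inv_left hx).eq
    have hz1 : (z : Matrix (Fin (c + d)) (Fin (c + d)) F) *
        Matrix.diagonal (fun i : Fin (c + d) => if (i : ℕ) < c then ξ else 1) =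
        Matrix.diagonal (fun i : Fin (c + d) => if (i : ℕ) < c then ξ else 1) *
          (z : Matrix (Fin (c + d)) (Fin (c + d)) F) := by
      have := congrArg Units.val hx
      rwa [Units.val_mul, Units.val_mul] at this
    have hz2 : ((z⁻¹ : GL (Fin (c + d)) F) : Matrix (Fin (c + d)) (Fin (c + d)) F) *
        Matrix.diagonal (fun i : Fin (c + d) => if (i : ℕ) < c then ξ else 1) =
        Matrix.diagonal (fun i : Fin (c + d) => if (i : ℕ) < c then ξ else 1) *
          ((z⁻¹ : GL (Fin (c + d)) F) : Matrix (Fin (c + d)) (Fin (c + d)) F) := by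
      have := congrArg Units.val hxinv
      rwa [Units.val_mul, Units.val_mul] at this
    have hdec1 := commute_diag_block hξ1 (z : Matrix (Fin (c + d)) (Fin (c + d)) F) hz1
    have hdec2 := commute_diag_block hξ1
      ((z⁻¹ : GL (Fin (c + d)) F) : Matrix (Fin (c + d)) (Fin (c + d)) F) hz2
    set A := (((z : Matrix (Fin (c + d)) (Fin (c + d)) F)).submatrix
      finSumFinEquiv finSumFinEquiv).toBlocks₁₁ with hA
    set B := (((z : Matrix (Fin (c + d)) (Fin (c + d)) F)).submatrix
      finSumFinEquiv finSumFinEquiv).toBlocks₂₂ with hB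
    set A' := ((((z⁻¹ : GL (Fin (c + d)) F) : Matrix (Fin (c + d)) (Fin (c + d)) F)).submatrix
      finSumFinEquiv finSumFinEquiv).toBlocks₁₁ with hA'
    set B' := ((((z⁻¹ : GL (Fin (c + d)) F) : Matrix (Fin (c + d)) (Fin (c + d)) F)).submatrix
      finSumFinEquiv finSumFinEquiv).toBlocks₂₂ with hB'
    have hmulinv : psi (A * A') (B * B') = psi 1 1 := by
      rw [← psi_mul, ← hdec1, ← hdec2, psi_one]
      exact Units.mul_inv z
    have hinvmul : psi (A' * A) (B' * B) = psi 1 1 := by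
      rw [← psi_mul, ← hdec1, ← hdec2, psi_one]
      exact Units.inv_mul z
    obtain ⟨hAA', hBB'⟩ := psi_inj hmulinv
    obtain ⟨hA'A, hB'B⟩ := psi_inj hinvmul
    refine ⟨(⟨A, A', hAA', hA'A⟩, ⟨B, B', hBB', hB'B⟩), ?_⟩
    apply Subtype.ext
    show ConjAct.toConjAct (blockGL _ _) = x
    rw [← ConjAct.toConjAct_ofConjAct x]
    congr 1
    refine Units.ext ?_
    exact hdec1.symm
  -- cardinality of the stabilizer
  have hstabcard : Nat.card (MulAction.stabilizer (ConjAct (GL (Fin (c + d)) F)) Dg) =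
      Nat.card (GL (Fin c) F) * Nat.card (GL (Fin d) F) := by
    rw [Nat.card_congr (Equiv.ofBijective Φ ⟨hΦinj, hΦsurj⟩).symm, Nat.card_prod]
  -- orbit-stabilizer
  have horb : Nat.card (MulAction.orbit (ConjAct (GL (Fin (c + d)) F)) Dg) *
      Nat.card (MulAction.stabilizer (ConjAct (GL (Fin (c + d)) F)) Dg) =
      Nat.card (GL (Fin (c + d)) F) := by
    have h := Nat.card_congr
      (MulAction.orbitProdStabilizerEquivGroup (ConjAct (GL (Fin (c + d)) F)) Dg)
    rw [Nat.card_prod] at h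
    rw [h]
    exact Nat.card_congr (ConjAct.ofConjAct (G := GL (Fin (c + d)) F)).toEquiv
  have hmain : Nat.card {gh : GL (Fin (c + d)) F × GL (Fin (c + d)) F |
      (∃ z : GL (Fin (c + d)) F,
        ((z * gh.1 * z⁻¹ : GL (Fin (c + d)) F) : Matrix (Fin (c + d)) (Fin (c + d)) F) =
          Matrix.diagonal (fun i : Fin (c + d) => if (i : ℕ) < c then ξ else 1)) ∧
      (∃ z : GL (Fin (c + d)) F,
        ((z * gh.2 * z⁻¹ : GL (Fin (c + d)) F) : Matrix (Fin (c + d)) (Fin (c + d)) F) =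
          Matrix.diagonal (fun i : Fin (c + d) => if (i : ℕ) < d then ξ else 1)) ∧
      ((gh.1 * gh.2 : GL (Fin (c + d)) F) : Matrix (Fin (c + d)) (Fin (c + d)) F) =
        Matrix.diagonal (fun _ : Fin (c + d) => ξ)} *
      (Nat.card (GL (Fin c) F) * Nat.card (GL (Fin d) F)) =
      Nat.card (GL (Fin (c + d)) F) := by
    rw [Nat.card_congr e1, ← hstabcard]
    exact horb
  -- cardinalities of the general linear groups
  have hcard : ∀ m : ℕ, Nat.card (GL (Fin m) F) =
      ∏ i ∈ Finset.range m, (q ^ m - q ^ i) := by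
    intro m
    rw [Matrix.card_GL_field, hq]
    exact Fin.prod_univ_eq_prod_range (fun i => q ^ m - q ^ i) m
  have hpos : 0 < Nat.card (GL (Fin c) F) * Nat.card (GL (Fin d) F) := by
    have h1 : Nonempty (GL (Fin c) F) := ⟨1⟩
    have h2 : Nonempty (GL (Fin d) F) := ⟨1⟩
    exact Nat.mul_pos Nat.card_pos Nat.card_pos
  refine Nat.eq_of_mul_eq_mul_right hpos ?_
  rw [mul_right_comm, hmain, hcard, hcard, hcard]
  exact key_numeric q c d
end
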